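/- arXiv:1304.2084 — 3 statements merged into one kernel-verified Lean document; each statement's English description precedes it below -/
import Mathlib

section
/- Let N ≥ 2 and let {Q₁, Q₂} be a basis of the ℤ/Nℤ-module ℤ/Nℤ ⊕ ℤ/Nℤ. Then there exist an integer k with gcd(k, N) = 1 and a matrix A = [[a,b],[c,d]] ∈ SL₂(ℤ) such that for every τ in the complex upper half plane, Λ(τ; Q₁, Q₂) = Λ_k((aτ+b)/(cτ+d)). -/
open Complex

/-- The Weierstrass ℘-function of the lattice `L_τ = ℤ + ℤτ`. -/
noncomputable def wp (τ z : ℂ) : ℂ :=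
  1 / z ^ 2 +
    ∑' p : {p : ℤ × ℤ // p ≠ 0},
      (1 / (z - ((p.1.1 : ℂ) + (p.1.2 : ℂ) * τ)) ^ 2 -
        1 / ((p.1.1 : ℂ) + (p.1.2 : ℂ) * τ) ^ 2)

/-- `E(τ; r, s) = (2πi)⁻² ℘((rτ+s)/N; L_τ) − 1/12`. -/
noncomputable def Efun (N : ℕ) (r s : ℤ) (τ : ℂ) : ℂ :=
  (2 * (Real.pi : ℂ) * Complex.I) ^ (-2 : ℤ) *
    wp τ (((r : ℂ) * τ + (s : ℂ)) / (N : ℂ)) - 1 / 12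

/-- `ζ = exp(2πi/N)`. -/
noncomputable def zetaN (N : ℕ) : ℂ := Complex.exp (2 * (Real.pi : ℂ) * Complex.I / (N : ℂ))

/-- `q = exp(2πiτ/N)`. -/
noncomputable def qN (N : ℕ) (τ : ℂ) : ℂ :=
  Complex.exp (2 * (Real.pi : ℂ) * Complex.I * τ / (N : ℂ))

/-- `{x}`: the unique integer with `0 ≤ {x} ≤ N/2` and `x ≡ μ(x){x} (mod N)`. -/
def brace (N : ℕ) (x : ℤ) : ℤ := min (x % (N : ℤ)) ((N : ℤ) - x % (N : ℤ))

/-- The sign `μ(x) ∈ {±1}`, with `μ(x) = 1` when `x ≡ 0, N/2 (mod N)`. -/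
def mu (N : ℕ) (x : ℤ) : ℤ := if x % (N : ℤ) ≤ (N : ℤ) - x % (N : ℤ) then 1 else -1

/-- `ω = ζ^{μ(r)s}`. -/
noncomputable def omegaE (N : ℕ) (r s : ℤ) : ℂ := zetaN N ^ (mu N r * s)

/-- `u = ω q^{{r}}`. -/
noncomputable def uE (N : ℕ) (r s : ℤ) (τ : ℂ) : ℂ := omegaE N r s * qN N τ ^ brace N r

/-- `Λ_k(τ) = (E(τ;1,0) − E(τ;1,k))/(E(τ;0,k) − E(τ;1,k))`. -/
noncomputable def LambdaK (N : ℕ) (k : ℤ) (τ : ℂ) : ℂ :=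
  (Efun N 1 0 τ - Efun N 1 k τ) / (Efun N 0 k τ - Efun N 1 k τ)

/-- `φ_τ(Q) = (rτ+s)/N` for the representative `(r,s)` with `0 ≤ r,s < N`. -/
noncomputable def phiPt (N : ℕ) (τ : ℂ) (Q : ZMod N × ZMod N) : ℂ :=
  ((Q.1.val : ℂ) * τ + (Q.2.val : ℂ)) / (N : ℂ)

/-- The generalized lambda function `Λ(τ; Q₁, Q₂)`. -/
noncomputable def LambdaB (N : ℕ) (Q₁ Q₂ : ZMod N × ZMod N) (τ : ℂ) : ℂ :=
  (wp τ (phiPt N τ Q₁) - wp τ (phiPt N τ (Q₁ + Q₂))) /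
    (wp τ (phiPt N τ Q₂) - wp τ (phiPt N τ (Q₁ + Q₂)))

open Classical in
/-- The constant `C_N`. -/
noncomputable def CN (N : ℕ) : ℕ :=
  if N = 2 then 2 ^ 4
  else if IsPrimePow N then (if N.minFac ≤ 3 then N.minFac ^ 2 else N.minFac)
  else 1

/-- `g₂(τ) = 60 Σ' ω⁻⁴`. -/
noncomputable def g2 (τ : ℂ) : ℂ :=
  60 * ∑' p : {p : ℤ × ℤ // p ≠ 0}, (((p.1.1 : ℂ) + (p.1.2 : ℂ) * τ) ^ 4)⁻¹

/-- `g₃(τ) = 140 Σ' ω⁻⁶`. -/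
noncomputable def g3 (τ : ℂ) : ℂ :=
  140 * ∑' p : {p : ℤ × ℤ // p ≠ 0}, (((p.1.1 : ℂ) + (p.1.2 : ℂ) * τ) ^ 6)⁻¹

/-- The modular invariant `j(τ)`. -/
noncomputable def jInv (τ : ℂ) : ℂ := 1728 * g2 τ ^ 3 / (g2 τ ^ 3 - 27 * g3 τ ^ 2)

namespace Stmt11Aux


lemma exists_coprime_shift (N : ℕ) (hN : 0 < N) (c₀ d₀ : ℤ)
    (hB : ∃ x y w : ℤ, x * c₀ + y * d₀ + w * (N : ℤ) = 1) :
    ∃ c d : ℤ, IsCoprime c d ∧ (N : ℤ) ∣ c - c₀ ∧ (N : ℤ) ∣ d - d₀ := by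
  obtain ⟨x, y, w, hxyw⟩ := hB
  set c : ℤ := if c₀ = 0 then (N : ℤ) else c₀ with hcdef
  have hc0 : c ≠ 0 := by
    rw [hcdef]; split_ifs with h
    · exact_mod_cast hN.ne'
    · exact h
  have hcc : (N : ℤ) ∣ c - c₀ := by
    rw [hcdef]; split_ifs with h <;> simp [h]
  set s : Finset ℕ :=
    c.natAbs.primeFactors.filter (fun p => ¬ p ∣ N ∧ ¬ p ∣ d₀.natAbs) with hsdef
  set e : ℕ := ∏ p ∈ s, p with hedef
  set d : ℤ := d₀ + (N : ℤ) * (e : ℤ) with hddef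
  refine ⟨c, d, ?_, hcc, ⟨(e : ℤ), by rw [hddef]; ring⟩⟩
  rw [Int.isCoprime_iff_gcd_eq_one]
  by_contra hg
  obtain ⟨p, hp, hpc, hpd⟩ := Nat.Prime.not_coprime_iff_dvd.mp hg
  have hpcZ : (p : ℤ) ∣ c := Int.natAbs_dvd_natAbs.mp (by simpa using hpc)
  have hpdZ : (p : ℤ) ∣ d := Int.natAbs_dvd_natAbs.mp (by simpa using hpd)
  by_cases hpN : p ∣ N
  · have hpNZ : (p : ℤ) ∣ (N : ℤ) := Int.natCast_dvd_natCast.mpr hpN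
    have hpc₀ : (p : ℤ) ∣ c₀ := by
      have := dvd_sub hpcZ (hpNZ.trans hcc)
      simpa using this
    have hpd₀ : (p : ℤ) ∣ d₀ := by
      have : (p : ℤ) ∣ d - (N : ℤ) * (e : ℤ) := dvd_sub hpdZ (hpNZ.mul_right _)
      simpa [hddef] using this
    have hp1 : (p : ℤ) ∣ 1 := by
      rw [← hxyw]
      exact dvd_add (dvd_add (hpc₀.mul_left x) (hpd₀.mul_left y)) (hpNZ.mul_left w)
    have := Int.le_of_dvd one_pos hp1
    have := hp.two_le
    omega
  · by_cases hpd₀ : p ∣ d₀.natAbs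
    · have hpd₀Z : (p : ℤ) ∣ d₀ := Int.natAbs_dvd_natAbs.mp (by simpa using hpd₀)
      have hpe : ¬ p ∣ e := by
        intro hpe
        obtain ⟨q, hq, hpq⟩ := (hp.prime.dvd_finset_prod_iff _).mp hpe
        rw [hsdef, Finset.mem_filter] at hq
        obtain ⟨hq1, hqN, hqd⟩ := hq
        have hqprime : q.Prime := Nat.prime_of_mem_primeFactors hq1
        have : p = q := (Nat.prime_dvd_prime_iff_eq hp hqprime).mp hpq
        subst this
        exact hqd hpd₀
      have hpNe : (p : ℤ) ∣ (N : ℤ) * (e : ℤ) := by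
        have : (p : ℤ) ∣ d - d₀ := dvd_sub hpdZ hpd₀Z
        simpa [hddef] using this
      have : p ∣ N * e := by exact_mod_cast hpNe
      rcases (Nat.Prime.dvd_mul hp).mp this with h | h
      · exact hpN h
      · exact hpe h
    · have hpmem : p ∈ s := by
        rw [hsdef, Finset.mem_filter]
        refine ⟨Nat.mem_primeFactors.mpr ⟨hp, hpc, by simpa using hc0⟩, hpN, hpd₀⟩
      have hpe : p ∣ e := Finset.dvd_prod_of_mem _ hpmem
      have hpd₀Z : (p : ℤ) ∣ d₀ := by
        have h1 : (p : ℤ) ∣ (N : ℤ) * (e : ℤ) := Dvd.dvd.mul_left (Int.natCast_dvd_natCast.mpr hpe) _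
        have := dvd_sub hpdZ h1
        simpa [hddef] using this
      exact hpd₀ (Int.natAbs_dvd_natAbs.mpr (by simpa using hpd₀Z))

lemma exists_SL2_lift (N : ℕ) (hN : 0 < N) (α β γ δ : ZMod N)
    (hdet : α * δ - β * γ = 1) :
    ∃ a b c d : ℤ, a * d - b * c = 1 ∧ (a : ZMod N) = α ∧ (b : ZMod N) = β ∧
      (c : ZMod N) = γ ∧ (d : ZMod N) = δ := by
  haveI : NeZero N := ⟨hN.ne'⟩
  have cast_val : ∀ ξ : ZMod N, ((ξ.val : ℤ) : ZMod N) = ξ := by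
    intro ξ
    push_cast
    exact ZMod.natCast_rightInverse ξ
  set a' : ℤ := (α.val : ℤ)
  set b' : ℤ := (β.val : ℤ)
  set c₀ : ℤ := (γ.val : ℤ)
  set d₀ : ℤ := (δ.val : ℤ)
  have hdvd0 : (N : ℤ) ∣ a' * d₀ - b' * c₀ - 1 := by
    rw [← ZMod.intCast_zmod_eq_zero_iff_dvd]
    push_cast
    rw [cast_val α, cast_val β, cast_val γ, cast_val δ]
    rw [show (α * δ - β * γ : ZMod N) = 1 from hdet]
    ring
  obtain ⟨w0, hw0⟩ := hdvd0
  obtain ⟨c, d, hcop, hcc, hdd⟩ := exists_coprime_shift N hN c₀ d₀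
    ⟨-b', a', -w0, by linarith [hw0]⟩
  obtain ⟨x, y, hxy⟩ := hcop
  obtain ⟨m, hm⟩ := hcc
  obtain ⟨n, hn⟩ := hdd
  have hdvd : (N : ℤ) ∣ a' * d - b' * c - 1 :=
    ⟨w0 + a' * n - b' * m, by linear_combination hw0 + a' * hn - b' * hm⟩
  obtain ⟨t, ht⟩ := hdvd
  refine ⟨y + (x * (a' - y) + y * (b' + x)) * c, -x + (x * (a' - y) + y * (b' + x)) * d, c, d,
    by linear_combination hxy, ?_, ?_, ?_, ?_⟩
  · have : (N : ℤ) ∣ (y + (x * (a' - y) + y * (b' + x)) * c) - a' :=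
      ⟨-(y * t), by linear_combination (-y) * ht + a' * hxy⟩
    obtain ⟨r, hr⟩ := this
    have : ((y + (x * (a' - y) + y * (b' + x)) * c : ℤ) : ZMod N) = ((a' + N * r : ℤ) : ZMod N) := by
      rw [show a' + (N:ℤ) * r = y + (x * (a' - y) + y * (b' + x)) * c by linarith [hr]]
    rw [this]
    push_cast
    simp [a', cast_val α]
  · have : (N : ℤ) ∣ (-x + (x * (a' - y) + y * (b' + x)) * d) - b' :=
      ⟨x * t, by linear_combination x * ht + b' * hxy⟩
    obtain ⟨r, hr⟩ := this
    have : ((-x + (x * (a' - y) + y * (b' + x)) * d : ℤ) : ZMod N) = ((b' + N * r : ℤ) : ZMod N) := by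
      rw [show b' + (N:ℤ) * r = -x + (x * (a' - y) + y * (b' + x)) * d by linarith [hr]]
    rw [this]
    push_cast
    simp [b', cast_val β]
  · have : ((c : ℤ) : ZMod N) = ((c₀ + N * m : ℤ) : ZMod N) := by
      rw [show c₀ + (N:ℤ) * m = c by linarith [hm]]
    rw [this]; push_cast; simp [c₀, cast_val γ]
  · have : ((d : ℤ) : ZMod N) = ((d₀ + N * n : ℤ) : ZMod N) := by
      rw [show d₀ + (N:ℤ) * n = d by linarith [hn]]
    rw [this]; push_cast; simp [d₀, cast_val δ]



noncomputable def latt (τ : ℂ) (p : ℤ × ℤ) : ℂ := (p.1 : ℂ) + (p.2 : ℂ) * τ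

noncomputable def ccF (τ : ℂ) (p : ℤ × ℤ) : ℂ := if p = 0 then 0 else 1 / latt τ p ^ 2

noncomputable def FF (τ z : ℂ) (p : ℤ × ℤ) : ℂ := 1 / (z - latt τ p) ^ 2 - ccF τ p

lemma latt_zero (τ : ℂ) : latt τ 0 = 0 := by simp [latt]

lemma latt_sub (τ : ℂ) (p q : ℤ × ℤ) : latt τ (p - q) = latt τ p - latt τ q := by
  simp only [latt, Prod.fst_sub, Prod.snd_sub]
  push_cast
  ring

lemma norm_latt {τ : ℂ} (hτ : 0 < τ.im) (p : ℤ × ℤ) :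
    τ.im / (τ.im + ‖τ‖ + 1) * max |(p.1 : ℝ)| |(p.2 : ℝ)| ≤ ‖latt τ p‖ := by
  have hS0 : 0 < τ.im + ‖τ‖ + 1 := by positivity
  have hy : |(p.2 : ℝ)| * τ.im ≤ ‖latt τ p‖ := by
    have h1 := Complex.abs_im_le_norm (latt τ p)
    have him : (latt τ p).im = (p.2 : ℝ) * τ.im := by simp [latt]
    rw [him, abs_mul, abs_of_pos hτ] at h1
    exact h1
  have hx : |(p.1 : ℝ)| ≤ ‖latt τ p‖ + |(p.2 : ℝ)| * ‖τ‖ := by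
    have h2 : ((p.1 : ℂ)) = latt τ p - (p.2 : ℂ) * τ := by simp [latt]
    calc |(p.1 : ℝ)| = ‖(p.1 : ℂ)‖ := by
          rw [Complex.norm_intCast]
      _ = ‖latt τ p - (p.2 : ℂ) * τ‖ := by rw [← h2]
      _ ≤ ‖latt τ p‖ + ‖(p.2 : ℂ) * τ‖ := by
          simpa using norm_sub_le (latt τ p) ((p.2 : ℂ) * τ)
      _ = ‖latt τ p‖ + |(p.2 : ℝ)| * ‖τ‖ := by
          rw [norm_mul, Complex.norm_intCast]
  rw [div_mul_eq_mul_div, div_le_iff₀ hS0]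
  have hL : 0 ≤ ‖latt τ p‖ := norm_nonneg _
  have hT : 0 ≤ ‖τ‖ := norm_nonneg _
  rcases max_cases |(p.1 : ℝ)| |(p.2 : ℝ)| with ⟨h1, h2⟩ | ⟨h1, h2⟩ <;> rw [h1] <;>
    nlinarith [mul_le_mul_of_nonneg_left hx hτ.le, mul_le_mul_of_nonneg_left hy hT,
      abs_nonneg ((p.1 : ℝ)), abs_nonneg ((p.2 : ℝ))]

lemma summable_base :
    Summable (fun p : ℤ × ℤ => (max |(p.1 : ℝ)| |(p.2 : ℝ)|) ^ (-3 : ℝ)) := by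
  have h := EisensteinSeries.summable_one_div_norm_rpow (k := 3) (by norm_num)
  have h2 : Summable ((fun x : Fin 2 → ℤ => ‖x‖ ^ (-(3:ℝ))) ∘ (finTwoArrowEquiv ℤ).symm) :=
    (Equiv.summable_iff _).mpr h
  apply h2.congr
  intro p
  simp only [Function.comp_apply, finTwoArrowEquiv_symm_apply,
    EisensteinSeries.norm_eq_max_natAbs]
  congr 1
  simp [Nat.cast_natAbs, Nat.cast_max]

lemma summable_FF {τ : ℂ} (hτ : 0 < τ.im) (z : ℂ) : Summable (FF τ z) := by
  set r : ℝ := τ.im / (τ.im + ‖τ‖ + 1) with hrdef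
  have hr : 0 < r := by positivity
  set A : ℝ := ‖z‖ with hAdef
  have hA : 0 ≤ A := norm_nonneg _
  set C : ℝ := 12 * A / r ^ 3 with hCdef
  set B : ℝ := (2 * A + 2) / r with hBdef
  apply Summable.of_norm_bounded_eventually (g :=
    fun p : ℤ × ℤ => C * (max |(p.1 : ℝ)| |(p.2 : ℝ)|) ^ (-3 : ℝ)) (summable_base.mul_left C)
  rw [Filter.eventually_cofinite]
  have hfin : {p : ℤ × ℤ | max |(p.1 : ℝ)| |(p.2 : ℝ)| ≤ B}.Finite := by
    apply Set.Finite.subset (Set.finite_Icc ((-⌈B⌉, -⌈B⌉) : ℤ × ℤ) (⌈B⌉, ⌈B⌉))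
    intro p hp
    simp only [Set.mem_setOf_eq] at hp
    have h1 : |(p.1 : ℝ)| ≤ B := le_trans (le_max_left _ _) hp
    have h2 : |(p.2 : ℝ)| ≤ B := le_trans (le_max_right _ _) hp
    rw [abs_le] at h1 h2
    have hBc := Int.le_ceil B
    have k1 : -(⌈B⌉ : ℝ) ≤ (p.1 : ℝ) := by linarith [h1.1]
    have k2 : (p.1 : ℝ) ≤ (⌈B⌉ : ℝ) := by linarith [h1.2]
    have k3 : -(⌈B⌉ : ℝ) ≤ (p.2 : ℝ) := by linarith [h2.1]
    have k4 : (p.2 : ℝ) ≤ (⌈B⌉ : ℝ) := by linarith [h2.2]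
    simp only [Set.mem_Icc, Prod.le_def]
    exact ⟨⟨by exact_mod_cast k1, by exact_mod_cast k3⟩,
      by exact_mod_cast k2, by exact_mod_cast k4⟩
  apply hfin.subset
  intro p hp
  simp only [Set.mem_setOf_eq] at hp ⊢
  by_contra hM
  push_neg at hM
  apply hp
  have hB0 : 0 < B := by positivity
  have hM0 : (0:ℝ) < max |(p.1 : ℝ)| |(p.2 : ℝ)| := lt_trans hB0 hM
  set M : ℝ := max |(p.1 : ℝ)| |(p.2 : ℝ)| with hMdef
  have hrB : r * B = 2 * A + 2 := by
    rw [hBdef]; field_simp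
  have hrM : 2 * A + 2 ≤ r * M := by
    nlinarith
  have hW := norm_latt hτ p
  rw [← hrdef, ← hMdef] at hW
  set w : ℂ := latt τ p with hwdef
  set W : ℝ := ‖w‖ with hWdef
  have hWlb : 2 * A + 2 ≤ W := le_trans hrM hW
  have hp0 : p ≠ 0 := by
    rintro rfl
    simp only [Prod.fst_zero, Prod.snd_zero, Int.cast_zero, abs_zero, max_self] at hMdef
    rw [hMdef] at hM0
    exact lt_irrefl _ hM0
  have hW0 : 0 < W := by linarith
  have hw0 : w ≠ 0 := by
    intro h
    rw [h] at hWdef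
    simp at hWdef
    rw [hWdef] at hW0
    exact lt_irrefl _ hW0
  have hD : W - A ≤ ‖z - w‖ := by
    have h1 : ‖w‖ - ‖z‖ ≤ ‖w - z‖ :=
      norm_sub_norm_le w z
    rwa [norm_sub_rev w z] at h1
  have hzw0 : z - w ≠ 0 := by
    intro h
    rw [h] at hD
    simp at hD
    linarith
  have hFeq : FF τ z p = z * (2*w - z) / ((z - w)^2 * w^2) := by
    rw [FF, ccF, if_neg hp0, ← hwdef]
    field_simp
    ring
  rw [hFeq, norm_div, norm_mul, norm_mul, norm_pow, norm_pow, ← hAdef, ← hWdef]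
  have hnum : ‖2*w - z‖ ≤ 3 * W := by
    have h1 : ‖2*w - z‖ ≤ ‖2*w‖ + ‖z‖ := by
      simpa using norm_sub_le (2*w) z
    rw [norm_mul, Complex.norm_two, ← hWdef, ← hAdef] at h1
    linarith
  have hDD : W/2 ≤ ‖z - w‖ := by linarith
  have step1 : A * ‖2*w-z‖ / (‖z-w‖^2 * W^2)
      ≤ (A * (3*W)) / ((W/2)^2 * W^2) := by
    apply div_le_div₀ (by positivity) (mul_le_mul_of_nonneg_left hnum hA) (by positivity)
      (mul_le_mul_of_nonneg_right (pow_le_pow_left₀ (by positivity) hDD 2) (by positivity))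
  have step2 : (A * (3*W)) / ((W/2)^2 * W^2) = 12 * A / W^3 := by
    field_simp
    ring
  have heq : C * M ^ (-3 : ℝ) = 12 * A / (r*M)^3 := by
    rw [show (-3 : ℝ) = -((3:ℕ):ℝ) by norm_num, Real.rpow_neg hM0.le, Real.rpow_natCast,
      hCdef, mul_pow, ← div_eq_mul_inv, div_div]
  have step3 : 12 * A / W^3 ≤ 12 * A / (r*M)^3 := by
    have h30 : (0:ℝ) < (r*M)^3 := by positivity
    have h3 : (r*M)^3 ≤ W^3 := pow_le_pow_left₀ (by positivity) hW 3
    exact div_le_div_of_nonneg_left (by positivity) h30 h3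
  rw [heq]
  calc A * ‖2*w-z‖ / (‖z-w‖^2 * W^2)
      ≤ (A * (3*W)) / ((W/2)^2 * W^2) := step1
    _ = 12 * A / W^3 := step2
    _ ≤ 12 * A / (r*M)^3 := step3

lemma wp_eq {τ : ℂ} (hτ : 0 < τ.im) (z : ℂ) : wp τ z = ∑' p : ℤ × ℤ, FF τ z p := by
  have hs := summable_FF hτ z
  rw [Summable.tsum_eq_add_tsum_ite hs 0]
  have h0 : FF τ z 0 = 1 / z ^ 2 := by simp [FF, ccF, latt_zero]
  rw [h0, wp]
  congr 1
  have h1 : ∑' p : {p : ℤ × ℤ // p ≠ 0},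
      (1 / (z - ((p.1.1 : ℂ) + (p.1.2 : ℂ) * τ)) ^ 2 -
        1 / ((p.1.1 : ℂ) + (p.1.2 : ℂ) * τ) ^ 2)
      = ∑' p : {p : ℤ × ℤ // p ≠ 0}, (fun q => if q = 0 then 0 else FF τ z q) ↑p := by
    apply tsum_congr
    intro p
    simp only [if_neg p.2]
    simp [FF, ccF, latt, p.2]
  rw [h1]
  have h2 : Function.support (fun q : ℤ × ℤ => if q = 0 then 0 else FF τ z q)
      ⊆ {q : ℤ × ℤ | q ≠ 0} := by
    intro q hq
    simp only [Function.mem_support] at hq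
    intro h
    exact hq (by rw [if_pos h])
  have h3 := tsum_subtype_eq_of_support_subset (s := {q : ℤ × ℤ | q ≠ 0}) h2
  rw [← h3]
  rfl

lemma wp_reflect {τ : ℂ} (hτ : 0 < τ.im) (u : ℤ × ℤ) (z : ℂ) :
    wp τ (latt τ u - z) = wp τ z := by
  have key : ∀ (w : ℂ) (q : ℤ × ℤ),
      FF τ (latt τ u - w) (u - q) = FF τ w q + (ccF τ q - ccF τ (u - q)) := by
    intro w q
    have h1 : latt τ (u - q) = latt τ u - latt τ q := latt_sub τ u q
    simp only [FF, h1]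
    rw [show (latt τ u - w - (latt τ u - latt τ q)) ^ 2 = (w - latt τ q) ^ 2 by ring]
    ring
  have hd : Summable (fun q : ℤ × ℤ => ccF τ q - ccF τ (u - q)) := by
    have h1 : Summable ((FF τ (latt τ u - z)) ∘ (Equiv.subLeft u)) :=
      (summable_FF hτ _).comp_injective (Equiv.subLeft u).injective
    apply Summable.congr (h1.sub (summable_FF hτ z))
    intro q
    simp only [Function.comp_apply, Equiv.subLeft_apply, Pi.sub_apply]
    rw [key z q]
    ring
  have main : ∀ w : ℂ, wp τ (latt τ u - w)
      = wp τ w + ∑' q : ℤ × ℤ, (ccF τ q - ccF τ (u - q)) := by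
    intro w
    rw [wp_eq hτ, wp_eq hτ w]
    rw [← (Equiv.subLeft u).tsum_eq (FF τ (latt τ u - w))]
    calc ∑' q : ℤ × ℤ, FF τ (latt τ u - w) (Equiv.subLeft u q)
        = ∑' q : ℤ × ℤ, (FF τ w q + (ccF τ q - ccF τ (u - q))) := by
          apply tsum_congr
          intro q
          rw [Equiv.subLeft_apply]
          exact key w q
      _ = (∑' q : ℤ × ℤ, FF τ w q) + ∑' q : ℤ × ℤ, (ccF τ q - ccF τ (u - q)) :=
          Summable.tsum_add (summable_FF hτ w) hd
  have hC : ∑' q : ℤ × ℤ, (ccF τ q - ccF τ (u - q)) = 0 := by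
    have h2 := main (latt τ u / 2)
    rw [show latt τ u - latt τ u / 2 = latt τ u / 2 by ring] at h2
    exact (left_eq_add.mp h2)
  rw [main z, hC, add_zero]

lemma wp_even {τ : ℂ} (hτ : 0 < τ.im) (z : ℂ) : wp τ (-z) = wp τ z := by
  have h := wp_reflect hτ 0 z
  rw [latt_zero, zero_sub] at h
  exact h

lemma wp_periodic {τ : ℂ} (hτ : 0 < τ.im) (u : ℤ × ℤ) (z : ℂ) :
    wp τ (z + latt τ u) = wp τ z := by
  have h := wp_reflect hτ u (-z)
  rw [sub_neg_eq_add, add_comm] at h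
  rw [h, wp_even hτ]

lemma wp_SL2 (τ : ℂ) (a b c d : ℤ) (hdet : a * d - b * c = 1) (z : ℂ)
    (hlam : ((c:ℂ) * τ + (d:ℂ)) ≠ 0) :
    wp (((a:ℂ) * τ + (b:ℂ)) / ((c:ℂ) * τ + (d:ℂ))) z
      = ((c:ℂ) * τ + (d:ℂ)) ^ 2 * wp τ (((c:ℂ) * τ + (d:ℂ)) * z) := by
  set lam : ℂ := (c:ℂ) * τ + (d:ℂ) with hlamdef
  set σ : ℂ := ((a:ℂ) * τ + (b:ℂ)) / lam with hσdef
  have hdiv : ∀ x w : ℂ, 1 / (x - w / lam) ^ 2 = lam ^ 2 * (1 / (lam * x - w) ^ 2) := by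
    intro x w
    rw [show x - w / lam = (lam * x - w) / lam by field_simp, div_pow, one_div_div,
      mul_one_div]
  have hdiv2 : ∀ w : ℂ, 1 / (w / lam) ^ 2 = lam ^ 2 * (1 / w ^ 2) := by
    intro w
    rw [div_pow, one_div_div, mul_one_div]
  let gE : (ℤ × ℤ) ≃ (ℤ × ℤ) :=
    { toFun := fun p => (p.1 * d + p.2 * b, p.1 * c + p.2 * a)
      invFun := fun q => (q.1 * a - q.2 * b, -(q.1 * c) + q.2 * d)
      left_inv := by
        intro p
        have e1 : (p.1 * d + p.2 * b) * a - (p.1 * c + p.2 * a) * b = p.1 := by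
          linear_combination p.1 * hdet
        have e2 : -((p.1 * d + p.2 * b) * c) + (p.1 * c + p.2 * a) * d = p.2 := by
          linear_combination p.2 * hdet
        simp only []
        exact Prod.ext e1 e2
      right_inv := by
        intro q
        have e1 : (q.1 * a - q.2 * b) * d + (-(q.1 * c) + q.2 * d) * b = q.1 := by
          linear_combination q.1 * hdet
        have e2 : (q.1 * a - q.2 * b) * c + (-(q.1 * c) + q.2 * d) * a = q.2 := by
          linear_combination q.2 * hdet
        simp only []
        exact Prod.ext e1 e2 }
  have hg0 : gE 0 = 0 := by
    show ((0:ℤ) * d + (0:ℤ) * b, (0:ℤ) * c + (0:ℤ) * a) = (0, 0)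
    simp
  have hiff : ∀ p : ℤ × ℤ, p ≠ 0 ↔ gE p ≠ 0 := by
    intro p
    constructor
    · intro h hc
      exact h (gE.injective (by rw [hc, hg0]))
    · intro h hc
      rw [hc, hg0] at h
      exact h rfl
  let e0 : {p : ℤ × ℤ // p ≠ 0} ≃ {p : ℤ × ℤ // p ≠ 0} := gE.subtypeEquiv hiff
  have hlat : ∀ p : ℤ × ℤ, ((p.1 : ℂ) + (p.2 : ℂ) * σ) = latt τ (gE p) / lam := by
    intro p
    show ((p.1 : ℂ) + (p.2 : ℂ) * σ)
      = (((p.1 * d + p.2 * b : ℤ) : ℂ) + ((p.1 * c + p.2 * a : ℤ) : ℂ) * τ) / lam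
    rw [hσdef, hlamdef]
    push_cast
    field_simp [show (c:ℂ) * τ + (d:ℂ) ≠ 0 from hlam, show τ * (c:ℂ) + (d:ℂ) ≠ 0 by rw [mul_comm]; exact hlam]
    ring
  rw [wp, wp]
  have hterm : ∀ p : {p : ℤ × ℤ // p ≠ 0},
      (1 / (z - (((p.1.1 : ℂ)) + (p.1.2 : ℂ) * σ)) ^ 2 -
        1 / (((p.1.1 : ℂ)) + (p.1.2 : ℂ) * σ) ^ 2)
      = lam ^ 2 * (1 / (lam * z - latt τ (gE ↑p)) ^ 2 - 1 / (latt τ (gE ↑p)) ^ 2) := by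
    intro p
    rw [hlat ↑p, hdiv z _, hdiv2 _]
    ring
  rw [tsum_congr hterm, tsum_mul_left]
  have hre : ∑' p : {p : ℤ × ℤ // p ≠ 0},
      (1 / (lam * z - latt τ (gE ↑p)) ^ 2 - 1 / (latt τ (gE ↑p)) ^ 2)
      = ∑' q : {p : ℤ × ℤ // p ≠ 0},
        (1 / (lam * z - latt τ ↑q) ^ 2 - 1 / (latt τ ↑q) ^ 2) := by
    have := e0.tsum_eq (fun q : {p : ℤ × ℤ // p ≠ 0} =>
      (1 / (lam * z - latt τ ↑q) ^ 2 - 1 / (latt τ ↑q) ^ 2))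
    rw [← this]
    apply tsum_congr
    intro p
    congr 1
  rw [hre]
  have hsum : ∑' q : {p : ℤ × ℤ // p ≠ 0},
      (1 / (lam * z - ((q.1.1 : ℂ) + (q.1.2 : ℂ) * τ)) ^ 2 -
        1 / ((q.1.1 : ℂ) + (q.1.2 : ℂ) * τ) ^ 2)
      = ∑' q : {p : ℤ × ℤ // p ≠ 0},
        (1 / (lam * z - latt τ ↑q) ^ 2 - 1 / (latt τ ↑q) ^ 2) := by
    apply tsum_congr
    intro q
    rfl
  rw [hsum]
  have hz : (1:ℂ) / z ^ 2 = lam ^ 2 * (1 / (lam * z) ^ 2) := by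
    have := hdiv z 0
    simpa using this
  rw [hz]
  ring


lemma wp_point_congr {τ : ℂ} (hτ : 0 < τ.im) (N : ℕ) (hN : 0 < N) (v : ℤ × ℤ)
    (Q : ZMod N × ZMod N) (h1 : ((v.2 : ZMod N)) = Q.1) (h2 : ((v.1 : ZMod N)) = Q.2) :
    wp τ (latt τ v / (N : ℂ)) = wp τ (phiPt N τ Q) := by
  haveI : NeZero N := ⟨hN.ne'⟩
  have hNC : (N : ℂ) ≠ 0 := by exact_mod_cast hN.ne'
  have cast_val : ∀ ξ : ZMod N, ((ξ.val : ℤ) : ZMod N) = ξ := fun ξ => by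
    push_cast
    exact ZMod.natCast_rightInverse ξ
  have hd1 : (N : ℤ) ∣ v.1 - (Q.2.val : ℤ) := by
    rw [← ZMod.intCast_zmod_eq_zero_iff_dvd, Int.cast_sub, h2, cast_val Q.2, sub_self]
  have hd2 : (N : ℤ) ∣ v.2 - (Q.1.val : ℤ) := by
    rw [← ZMod.intCast_zmod_eq_zero_iff_dvd, Int.cast_sub, h1, cast_val Q.1, sub_self]
  obtain ⟨m, hm⟩ := hd1
  obtain ⟨n, hn⟩ := hd2
  have hm' : (v.1 : ℂ) = (Q.2.val : ℂ) + (N : ℂ) * (m : ℂ) := by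
    have : (v.1 : ℤ) = (Q.2.val : ℤ) + (N : ℤ) * m := by linarith
    exact_mod_cast congrArg (fun x : ℤ => (x : ℂ)) this
  have hn' : (v.2 : ℂ) = (Q.1.val : ℂ) + (N : ℂ) * (n : ℂ) := by
    have : (v.2 : ℤ) = (Q.1.val : ℤ) + (N : ℤ) * n := by linarith
    exact_mod_cast congrArg (fun x : ℤ => (x : ℂ)) this
  have key : latt τ v / (N : ℂ) = phiPt N τ Q + latt τ (m, n) := by
    rw [latt, phiPt, latt, hm', hn']
    field_simp
    ring
  rw [key, wp_periodic hτ (m, n)]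

end Stmt11Aux

/-- Proposition 3.1: `Λ(τ; Q₁, Q₂) = Λ_k ∘ A` for some `k` prime to `N` and
`A ∈ SL₂(ℤ)`. -/
theorem stmt11 (N : ℕ) (hN : 2 ≤ N) (Q₁ Q₂ : ZMod N × ZMod N)
    (hbasis : IsUnit (Q₁.1 * Q₂.2 - Q₁.2 * Q₂.1)) :
    ∃ k : ℤ, Int.gcd k N = 1 ∧
      ∃ A : Matrix.SpecialLinearGroup (Fin 2) ℤ,
        ∀ τ : ℂ, 0 < τ.im →
          LambdaB N Q₁ Q₂ τ =
            LambdaK N k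
              (((A 0 0 : ℤ) * τ + (A 0 1 : ℤ)) / ((A 1 0 : ℤ) * τ + (A 1 1 : ℤ))) := by
  classical
  haveI : NeZero N := ⟨by omega⟩
  obtain ⟨u, hu⟩ := hbasis
  set D : ZMod N := Q₁.1 * Q₂.2 - Q₁.2 * Q₂.1 with hDdef
  have cast_val : ∀ ξ : ZMod N, ((ξ.val : ℤ) : ZMod N) = ξ := fun ξ => by
    push_cast
    exact ZMod.natCast_rightInverse ξ
  refine ⟨(D.val : ℤ), ?_, ?_⟩
  · have h1 : Nat.Coprime D.val N := by
      rw [← hu]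
      exact ZMod.val_coe_unit_coprime u
    rw [Int.gcd_natCast_natCast]
    exact h1
  have hdet0 : Q₁.1 * ((↑u⁻¹ : ZMod N) * Q₂.2) - Q₁.2 * ((↑u⁻¹ : ZMod N) * Q₂.1) = 1 := by
    calc Q₁.1 * ((↑u⁻¹ : ZMod N) * Q₂.2) - Q₁.2 * ((↑u⁻¹ : ZMod N) * Q₂.1)
        = (↑u⁻¹ : ZMod N) * (Q₁.1 * Q₂.2 - Q₁.2 * Q₂.1) := by ring
      _ = (↑u⁻¹ : ZMod N) * ↑u := by rw [hu]
      _ = 1 := u.inv_mul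
  obtain ⟨a, b, c, d, hdet, ha, hb, hc, hd⟩ :=
    Stmt11Aux.exists_SL2_lift N (by omega) Q₁.1 Q₁.2 ((↑u⁻¹ : ZMod N) * Q₂.1)
      ((↑u⁻¹ : ZMod N) * Q₂.2) hdet0
  have hdetA : (!![a, b; c, d] : Matrix (Fin 2) (Fin 2) ℤ).det = 1 := by
    rw [Matrix.det_fin_two_of]; linarith
  set A : Matrix.SpecialLinearGroup (Fin 2) ℤ := ⟨!![a, b; c, d], hdetA⟩ with hAdef
  refine ⟨A, ?_⟩
  intro τ hτ
  have e00 : A 0 0 = a := rfl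
  have e01 : A 0 1 = b := rfl
  have e10 : A 1 0 = c := rfl
  have e11 : A 1 1 = d := rfl
  rw [e00, e01, e10, e11]
  have hNC : (N : ℂ) ≠ 0 := by
    simp only [ne_eq, Nat.cast_eq_zero]
    omega
  have hlam : ((c : ℂ) * τ + (d : ℂ)) ≠ 0 := by
    intro h
    have him := congrArg Complex.im h
    simp only [Complex.add_im, Complex.mul_im, Complex.intCast_im, Complex.intCast_re,
      Complex.zero_im, zero_mul, add_zero, mul_zero, zero_add] at him
    have hc0 : (c : ℝ) = 0 := by
      rcases mul_eq_zero.mp him with h' | h'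
      · exact h'
      · exact absurd h' hτ.ne'
    have hcZ : c = 0 := by exact_mod_cast hc0
    rw [hcZ] at h
    simp only [Int.cast_zero, zero_mul, zero_add] at h
    have hdZ : d = 0 := by exact_mod_cast h
    rw [hcZ, hdZ] at hdet
    simp at hdet
  set lam : ℂ := (c : ℂ) * τ + (d : ℂ) with hlamdef
  set σ : ℂ := ((a : ℂ) * τ + (b : ℂ)) / lam with hσdef
  have hkD : (((D.val : ℤ) : ℤ) : ZMod N) = D := cast_val D
  have key : ∀ (r s : ℤ) (Q : ZMod N × ZMod N),
      ((r * b + s * d : ℤ) : ZMod N) = Q.2 → ((r * a + s * c : ℤ) : ZMod N) = Q.1 →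
      wp σ (((r : ℂ) * σ + (s : ℂ)) / (N : ℂ)) = lam ^ 2 * wp τ (phiPt N τ Q) := by
    intro r s Q hv2 hv1
    have hstep := Stmt11Aux.wp_SL2 τ a b c d hdet (((r : ℂ) * σ + (s : ℂ)) / (N : ℂ)) hlam
    rw [← hlamdef, ← hσdef] at hstep
    rw [hstep]
    congr 1
    have harg : lam * (((r : ℂ) * σ + (s : ℂ)) / (N : ℂ))
        = Stmt11Aux.latt τ (r * b + s * d, r * a + s * c) / (N : ℂ) := by
      rw [Stmt11Aux.latt, hσdef, hlamdef]
      push_cast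
      field_simp [show (c:ℂ) * τ + (d:ℂ) ≠ 0 from hlam, show τ * (c:ℂ) + (d:ℂ) ≠ 0 by rw [mul_comm]; exact hlam]
      ring
    rw [harg, Stmt11Aux.wp_point_congr hτ N (by omega) _ Q hv1 hv2]
  have hDcast : (((D.val : ℕ) : ZMod N)) = D := by exact_mod_cast hkD
  have hQ1 := key 1 0 Q₁ (by push_cast; simpa using hb) (by push_cast; simpa using ha)
  have hQ2 := key 0 (D.val : ℤ) Q₂
    (by push_cast; rw [hd, hDcast, ← hu]; simp)
    (by push_cast; rw [hc, hDcast, ← hu]; simp)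
  have hQ12 := key 1 (D.val : ℤ) (Q₁ + Q₂)
    (by push_cast; rw [hb, hd, hDcast, ← hu]; simp [Prod.snd_add])
    (by push_cast; rw [ha, hc, hDcast, ← hu]; simp [Prod.fst_add])
  set β : ℂ := (2 * (Real.pi : ℂ) * Complex.I) ^ (-2 : ℤ) with hβdef
  have hβ : β ≠ 0 := by
    apply zpow_ne_zero
    apply mul_ne_zero
    · apply mul_ne_zero two_ne_zero
      exact Complex.ofReal_ne_zero.mpr Real.pi_ne_zero
    · exact Complex.I_ne_zero
  have hbl : β * lam ^ 2 ≠ 0 := mul_ne_zero hβ (pow_ne_zero 2 hlam)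
  rw [LambdaB, LambdaK, Efun, Efun, Efun, hQ1, hQ2, hQ12]
  rw [show β * (lam ^ 2 * wp τ (phiPt N τ Q₁)) - 1 / 12 -
      (β * (lam ^ 2 * wp τ (phiPt N τ (Q₁ + Q₂))) - 1 / 12)
      = (β * lam ^ 2) * (wp τ (phiPt N τ Q₁) - wp τ (phiPt N τ (Q₁ + Q₂))) by ring,
    show β * (lam ^ 2 * wp τ (phiPt N τ Q₂)) - 1 / 12 -
      (β * (lam ^ 2 * wp τ (phiPt N τ (Q₁ + Q₂))) - 1 / 12)
      = (β * lam ^ 2) * (wp τ (phiPt N τ Q₂) - wp τ (phiPt N τ (Q₁ + Q₂))) by ring]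
  rw [mul_div_mul_left _ _ hbl]
end

section
/- Let N ≥ 2, let {Q₁, Q₂} be a basis of ℤ/Nℤ ⊕ ℤ/Nℤ, and let A = [[a,b],[c,d]] ∈ SL₂(ℤ) with A ≡ ±I (mod N). Then for every τ in the complex upper half plane, Λ((aτ+b)/(cτ+d); Q₁, Q₂) = Λ(τ; Q₁, Q₂). -/
open Complex

noncomputable def Complex.abs : AbsoluteValue ℂ ℝ := NormedField.toAbsoluteValue ℂ

@[simp] lemma Complex.abs_apply_norm (z : ℂ) : Complex.abs z = ‖z‖ := rfl

namespace Stmt12Aux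

noncomputable section

variable {τ : ℂ}

/-- lattice point -/
def lat (τ : ℂ) (p : ℤ × ℤ) : ℂ := (p.1 : ℂ) + (p.2 : ℂ) * τ

lemma lat_zero (τ : ℂ) : lat τ 0 = 0 := by simp [lat]

lemma lat_add (τ : ℂ) (p q : ℤ × ℤ) : lat τ (p + q) = lat τ p + lat τ q := by
  simp only [lat, Prod.fst_add, Prod.snd_add]
  push_cast; ring

lemma lat_neg (τ : ℂ) (p : ℤ × ℤ) : lat τ (-p) = - lat τ p := by
  simp only [lat, Prod.fst_neg, Prod.snd_neg]
  push_cast; ring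

lemma lat_sub (τ : ℂ) (p q : ℤ × ℤ) : lat τ (p - q) = lat τ p - lat τ q := by
  rw [sub_eq_add_neg, lat_add, lat_neg, sub_eq_add_neg]

/-- integer combos of (1, τ) are uniquely determined -/
lemma lat_int_combo {τ : ℂ} (hτ : τ.im ≠ 0) {a b c d : ℤ}
    (h : (a : ℂ) * τ + b = (c : ℂ) * τ + d) : a = c ∧ b = d := by
  have him := congrArg Complex.im h
  simp only [Complex.add_im, Complex.mul_im, Complex.intCast_im, Complex.intCast_re,
    zero_mul, add_zero, zero_add] at him
  have hac' : a = c := by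
    have : ((a : ℝ) - c) * τ.im = 0 := by linarith
    rcases mul_eq_zero.mp this with h1 | h1
    · exact_mod_cast sub_eq_zero.mp h1
    · exact absurd h1 hτ
  subst hac'
  have : (b : ℂ) = d := by linear_combination h
  exact ⟨rfl, by exact_mod_cast this⟩

/-- term of the full Weierstrass sum -/
noncomputable def wterm (τ z : ℂ) (p : ℤ × ℤ) : ℂ := ((z - lat τ p) ^ 2)⁻¹ - ((lat τ p) ^ 2)⁻¹

/-- the Weierstrass sum over all of ℤ² -/
noncomputable def Wsum (τ z : ℂ) : ℂ := ∑' p : ℤ × ℤ, wterm τ z p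

/-- the (formal) derivative sum -/
noncomputable def Dsum (τ z : ℂ) : ℂ := ∑' p : ℤ × ℤ, (-2) * ((z - lat τ p) ^ 3)⁻¹

lemma Wsum_even (τ z : ℂ) : Wsum τ (-z) = Wsum τ z := by
  unfold Wsum
  rw [← (Equiv.neg (ℤ × ℤ)).tsum_eq (wterm τ (-z))]
  refine tsum_congr fun p => ?_
  simp only [Equiv.neg_apply, wterm, lat_neg]
  congr 2
  · ring
  · ring

lemma Dsum_shift (τ z : ℂ) (q : ℤ × ℤ) : Dsum τ (z + lat τ q) = Dsum τ z := by
  unfold Dsum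
  rw [← (Equiv.addRight q).tsum_eq (fun p => (-2) * ((z + lat τ q - lat τ p) ^ 3)⁻¹)]
  refine tsum_congr fun p => ?_
  simp only [Equiv.coe_addRight, lat_add]
  ring_nf


/-- the SL2 reindexing equivalence on ℤ × ℤ -/
def sigmaE (a b c d : ℤ) (hdet : a * d - b * c = 1) : (ℤ × ℤ) ≃ (ℤ × ℤ) where
  toFun p := (p.1 * d + p.2 * b, p.1 * c + p.2 * a)
  invFun p := (p.1 * a - p.2 * b, -(p.1 * c) + p.2 * d)
  left_inv p := by
    ext
    · show (p.1 * d + p.2 * b) * a - (p.1 * c + p.2 * a) * b = p.1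
      linear_combination p.1 * hdet
    · show -((p.1 * d + p.2 * b) * c) + (p.1 * c + p.2 * a) * d = p.2
      linear_combination p.2 * hdet
  right_inv p := by
    ext
    · show (p.1 * a - p.2 * b) * d + (-(p.1 * c) + p.2 * d) * b = p.1
      linear_combination p.1 * hdet
    · show (p.1 * a - p.2 * b) * c + (-(p.1 * c) + p.2 * d) * a = p.2
      linear_combination p.2 * hdet

lemma one_div_div_sq (j y : ℂ) : 1 / (y / j) ^ 2 = j ^ 2 * (1 / y ^ 2) := by
  rw [div_pow, one_div_div, div_eq_mul_one_div]

/-- modular transformation of wp -/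
lemma wp_modular (a b c d : ℤ) (hdet : a * d - b * c = 1) {τ : ℂ}
    (hj : (c : ℂ) * τ + d ≠ 0) (z : ℂ) :
    wp (((a : ℂ) * τ + b) / ((c : ℂ) * τ + d)) (z / ((c : ℂ) * τ + d)) =
      ((c : ℂ) * τ + d) ^ 2 * wp τ z := by
  set j : ℂ := (c : ℂ) * τ + d with hjdef
  set τ' : ℂ := ((a : ℂ) * τ + b) / j with hτ'def
  have key : ∀ p : ℤ × ℤ, (p.1 : ℂ) + (p.2 : ℂ) * τ' =
      (((sigmaE a b c d hdet p).1 : ℂ) + ((sigmaE a b c d hdet p).2 : ℂ) * τ) / j := by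
    intro p
    show (p.1 : ℂ) + (p.2 : ℂ) * (((a : ℂ) * τ + b) / j) =
      (((p.1 * d + p.2 * b : ℤ) : ℂ) + ((p.1 * c + p.2 * a : ℤ) : ℂ) * τ) / j
    push_cast
    field_simp
    ring
  -- subtype equivalence
  have hσ0 : ∀ p : ℤ × ℤ, p ≠ 0 ↔ sigmaE a b c d hdet p ≠ 0 := by
    intro p
    constructor
    · intro hp h0
      apply hp
      have : sigmaE a b c d hdet p = sigmaE a b c d hdet 0 := by
        rw [h0]; show (0 : ℤ × ℤ) = _ ; ext <;> simp [sigmaE]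
      exact (sigmaE a b c d hdet).injective this
    · intro hp h0
      apply hp
      rw [h0]; ext <;> simp [sigmaE]
  let σ' : {p : ℤ × ℤ // p ≠ 0} ≃ {p : ℤ × ℤ // p ≠ 0} :=
    (sigmaE a b c d hdet).subtypeEquiv hσ0
  unfold wp
  have hterm : ∀ p : {p : ℤ × ℤ // p ≠ 0},
      (1 / (z / j - ((p.1.1 : ℂ) + (p.1.2 : ℂ) * τ')) ^ 2 -
        1 / ((p.1.1 : ℂ) + (p.1.2 : ℂ) * τ') ^ 2) =
      j ^ 2 * (1 / (z - (((σ' p).1.1 : ℂ) + ((σ' p).1.2 : ℂ) * τ)) ^ 2 -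
        1 / ((((σ' p).1.1 : ℂ) + ((σ' p).1.2 : ℂ) * τ)) ^ 2) := by
    intro p
    rw [key p.1]
    show _ = j ^ 2 * (1 / (z - (((sigmaE a b c d hdet p.1).1 : ℂ) +
        ((sigmaE a b c d hdet p.1).2 : ℂ) * τ)) ^ 2 -
      1 / ((((sigmaE a b c d hdet p.1).1 : ℂ) + ((sigmaE a b c d hdet p.1).2 : ℂ) * τ)) ^ 2)
    rw [div_sub_div_same, one_div_div_sq, one_div_div_sq, mul_sub]
  calc 1 / (z / j) ^ 2 + ∑' p : {p : ℤ × ℤ // p ≠ 0},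
        (1 / (z / j - ((p.1.1 : ℂ) + (p.1.2 : ℂ) * τ')) ^ 2 -
          1 / ((p.1.1 : ℂ) + (p.1.2 : ℂ) * τ') ^ 2)
      = j ^ 2 * (1 / z ^ 2) + ∑' p : {p : ℤ × ℤ // p ≠ 0},
          j ^ 2 * (1 / (z - (((σ' p).1.1 : ℂ) + ((σ' p).1.2 : ℂ) * τ)) ^ 2 -
            1 / ((((σ' p).1.1 : ℂ) + ((σ' p).1.2 : ℂ) * τ)) ^ 2) := by
        rw [one_div_div_sq]
        congr 1
        exact tsum_congr hterm
    _ = j ^ 2 * (1 / z ^ 2) + j ^ 2 * ∑' p : {p : ℤ × ℤ // p ≠ 0},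
          (1 / (z - (((σ' p).1.1 : ℂ) + ((σ' p).1.2 : ℂ) * τ)) ^ 2 -
            1 / ((((σ' p).1.1 : ℂ) + ((σ' p).1.2 : ℂ) * τ)) ^ 2) := by
        rw [tsum_mul_left]
    _ = j ^ 2 * (1 / z ^ 2) + j ^ 2 * ∑' p : {p : ℤ × ℤ // p ≠ 0},
          (1 / (z - ((p.1.1 : ℂ) + (p.1.2 : ℂ) * τ)) ^ 2 -
            1 / (((p.1.1 : ℂ) + (p.1.2 : ℂ) * τ)) ^ 2) := by
        congr 1
        congr 1
        exact σ'.tsum_eq (fun q : {p : ℤ × ℤ // p ≠ 0} =>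
          (1 / (z - ((q.1.1 : ℂ) + (q.1.2 : ℂ) * τ)) ^ 2 -
            1 / (((q.1.1 : ℂ) + (q.1.2 : ℂ) * τ)) ^ 2))
    _ = j ^ 2 * (1 / z ^ 2 + ∑' p : {p : ℤ × ℤ // p ≠ 0},
          (1 / (z - ((p.1.1 : ℂ) + (p.1.2 : ℂ) * τ)) ^ 2 -
            1 / (((p.1.1 : ℂ) + (p.1.2 : ℂ) * τ)) ^ 2)) := by ring


/-- lower bound via Eisenstein r -/
lemma lat_lower (hτ : 0 < τ.im) {p : ℤ × ℤ} (hp : p ≠ 0) :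
    EisensteinSeries.r ⟨τ, hτ⟩ * (max |(p.1 : ℝ)| |(p.2 : ℝ)|) ≤ Complex.abs (lat τ p) := by
  have hx : (![p.2, p.1] : Fin 2 → ℤ) ≠ 0 := by
    intro h
    apply hp
    have h1 := congrFun h 0
    have h2 := congrFun h 1
    simp at h1 h2
    ext <;> simp [h1, h2]
  have := EisensteinSeries.r_mul_max_le (⟨τ, hτ⟩ : UpperHalfPlane) hx
  rw [EisensteinSeries.norm_eq_max_natAbs] at this
  simp only [Matrix.cons_val_zero, Matrix.cons_val_one, Matrix.head_cons] at this
  have heq : ((p.2 : ℂ) * τ + p.1) = lat τ p := by rw [lat]; ring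
  have hco : ((max (p.2.natAbs) (p.1.natAbs) : ℕ) : ℝ) = max |(p.1 : ℝ)| |(p.2 : ℝ)| := by
    rw [Nat.cast_max]
    rw [max_comm]
    congr 1 <;> rw [Nat.cast_natAbs] <;> push_cast <;> ring
  rw [hco] at this
  convert this using 2
  rw [← heq]
  rfl

lemma finite_low (hτ : 0 < τ.im) (R : ℝ) :
    {p : ℤ × ℤ | Complex.abs (lat τ p) ≤ R}.Finite := by
  set r := EisensteinSeries.r ⟨τ, hτ⟩ with hr
  have hrpos : 0 < r := EisensteinSeries.r_pos _
  set M : ℤ := ⌈R / r⌉ with hM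
  apply Set.Finite.subset (Set.finite_Icc ((-M, -M) : ℤ × ℤ) ((M, M) : ℤ × ℤ))
  intro p hp
  simp only [Set.mem_setOf_eq] at hp
  by_cases h0 : p = 0
  · subst h0
    have hR : 0 ≤ R := by simpa [lat] using hp
    have hM0 : (0 : ℤ) ≤ M := Int.ceil_nonneg (by positivity)
    simp only [Set.mem_Icc]
    refine ⟨⟨?_, ?_⟩, ?_, ?_⟩ <;> simp <;> omega
  · have h1 := (lat_lower hτ h0).trans hp
    have h2 : max |(p.1 : ℝ)| |(p.2 : ℝ)| ≤ R / r := by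
      rw [le_div_iff₀ hrpos]
      linarith [h1]
    have h3 : |(p.1 : ℝ)| ≤ R / r := le_trans (le_max_left _ _) h2
    have h4 : |(p.2 : ℝ)| ≤ R / r := le_trans (le_max_right _ _) h2
    have h5 : |(p.1 : ℝ)| ≤ (M : ℝ) := h3.trans (Int.le_ceil _)
    have h6 : |(p.2 : ℝ)| ≤ (M : ℝ) := h4.trans (Int.le_ceil _)
    have h5' : ((|p.1| : ℤ) : ℝ) ≤ (M : ℝ) := by rw [Int.cast_abs]; exact h5
    have h6' : ((|p.2| : ℤ) : ℝ) ≤ (M : ℝ) := by rw [Int.cast_abs]; exact h6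
    have h7 : |p.1| ≤ M := by exact_mod_cast h5'
    have h8 : |p.2| ≤ M := by exact_mod_cast h6'
    simp only [Set.mem_Icc]
    rw [abs_le] at h7 h8
    exact ⟨⟨h7.1, h8.1⟩, ⟨h7.2, h8.2⟩⟩

/-- master summability -/
lemma summable_master (hτ : 0 < τ.im) :
    Summable fun p : ℤ × ℤ => ((Complex.abs (lat τ p))⁻¹) ^ 3 := by
  set r := EisensteinSeries.r ⟨τ, hτ⟩ with hr
  have hrpos : 0 < r := EisensteinSeries.r_pos _
  have S1 : Summable fun x : Fin 2 → ℤ => (r⁻¹) ^ 3 * ‖x‖ ^ (-(3 : ℝ)) :=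
    (EisensteinSeries.summable_one_div_norm_rpow (by norm_num)).mul_left _
  have S2 : Summable fun x : Fin 2 → ℤ => ((Complex.abs ((x 0 : ℂ) * τ + (x 1 : ℂ)))⁻¹) ^ 3 := by
    apply S1.of_norm_bounded
    intro x
    by_cases hx : x = 0
    · subst hx
      simp only [Pi.zero_apply, Int.cast_zero, zero_mul, add_zero, map_zero, inv_zero]
      rw [norm_zero, Real.zero_rpow (by norm_num : (-3 : ℝ) ≠ 0)]
      simp
    · have hb := EisensteinSeries.r_mul_max_le (⟨τ, hτ⟩ : UpperHalfPlane) hx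
      have hnorm1 : (1 : ℝ) ≤ ‖x‖ := by
        rw [EisensteinSeries.norm_eq_max_natAbs]
        have : x 0 ≠ 0 ∨ x 1 ≠ 0 := by
          by_contra hc
          push_neg at hc
          apply hx
          ext i
          fin_cases i <;> simp [hc.1, hc.2]
        rcases this with h | h
        · have : 1 ≤ (x 0).natAbs := Int.natAbs_pos.mpr h
          exact_mod_cast le_trans (Nat.cast_le.mpr this) (by exact_mod_cast le_max_left _ _)
        · have : 1 ≤ (x 1).natAbs := Int.natAbs_pos.mpr h
          exact_mod_cast le_trans (Nat.cast_le.mpr this) (by exact_mod_cast le_max_right _ _)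
      have hnormpos : (0 : ℝ) < ‖x‖ := lt_of_lt_of_le zero_lt_one hnorm1
      have habs : 0 < Complex.abs ((x 0 : ℂ) * τ + (x 1 : ℂ)) :=
        lt_of_lt_of_le (by positivity) hb
      rw [Real.norm_of_nonneg (by positivity)]
      have key : ((Complex.abs ((x 0 : ℂ) * τ + (x 1 : ℂ)))⁻¹) ^ 3 ≤ (r⁻¹)^3 * (‖x‖⁻¹)^3 := by
        rw [← mul_pow, ← mul_inv]
        apply pow_le_pow_left₀ (by positivity)
        exact inv_anti₀ (by positivity) hb
      refine key.trans ?_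
      rw [Real.rpow_neg (norm_nonneg _)]
      rw [show ((3:ℝ)) = ((3:ℕ):ℝ) by norm_num, Real.rpow_natCast]
      apply le_of_eq
      ring
  -- transport along equiv
  let e : (ℤ × ℤ) ≃ (Fin 2 → ℤ) := (Equiv.prodComm ℤ ℤ).trans (finTwoArrowEquiv ℤ).symm
  have := e.summable_iff.mpr S2
  apply this.congr
  intro p
  show ((Complex.abs (((e p) 0 : ℂ) * τ + ((e p) 1 : ℂ)))⁻¹) ^ 3 = _
  have h0 : (e p) 0 = p.2 := by simp [e, finTwoArrowEquiv]
  have h1 : (e p) 1 = p.1 := by simp [e, finTwoArrowEquiv]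
  rw [h0, h1]
  congr 2
  rw [lat]; ring


lemma summable_of_locbound {E : Type*} [NormedAddCommGroup E] [CompleteSpace E]
    (hτ : 0 < τ.im) (F : ℤ × ℤ → E) (C R : ℝ)
    (h : ∀ p, R ≤ Complex.abs (lat τ p) → ‖F p‖ ≤ C * ((Complex.abs (lat τ p))⁻¹) ^ 3) :
    Summable F := by
  apply Summable.of_norm_bounded_eventually (g := fun p => C * ((Complex.abs (lat τ p))⁻¹) ^ 3)
    ((summable_master hτ).mul_left C)
  rw [Filter.eventually_cofinite]
  apply Set.Finite.subset (finite_low hτ R)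
  intro p hp
  simp only [Set.mem_setOf_eq] at hp ⊢
  by_contra h2
  push_neg at h2
  exact hp (h p h2.le)

lemma summable_wterm (hτ : 0 < τ.im) (z : ℂ) : Summable (wterm τ z) := by
  apply summable_of_locbound hτ _ (12 * Complex.abs z) (2 * Complex.abs z + 2)
  intro p hp
  set w := lat τ p with hw
  have hAw : (0 : ℝ) < Complex.abs w := lt_of_lt_of_le (by positivity) hp
  have hw0 : w ≠ 0 := by
    intro h; rw [h] at hAw; simp at hAw
  have hz2 : Complex.abs z ≤ Complex.abs w / 2 - 1 := by
    have : 2 * Complex.abs z + 2 ≤ Complex.abs w := hp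
    linarith
  have hzw_low : Complex.abs w / 2 ≤ Complex.abs (z - w) := by
    have h1 : Complex.abs w ≤ Complex.abs (z - w) + Complex.abs z := by
      calc Complex.abs w = Complex.abs (w - z + z) := by ring_nf
        _ ≤ Complex.abs (w - z) + Complex.abs z := Complex.abs.add_le _ _
        _ = Complex.abs (z - w) + Complex.abs z := by rw [AbsoluteValue.map_sub]
    linarith
  have hzw0 : z - w ≠ 0 := by
    intro h
    rw [h] at hzw_low
    simp only [map_zero] at hzw_low
    linarith
  have hid : wterm τ z p = z * (2 * w - z) / ((z - w) ^ 2 * w ^ 2) := by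
    rw [wterm, ← hw]
    field_simp
    ring
  rw [hid]
  have hnorm : ‖z * (2 * w - z) / ((z - w) ^ 2 * w ^ 2)‖ =
      Complex.abs z * Complex.abs (2 * w - z) /
        (Complex.abs (z - w) ^ 2 * Complex.abs w ^ 2) := by
    simp [map_div₀, map_mul, map_pow]
  rw [hnorm]
  have hnum : Complex.abs (2 * w - z) ≤ 3 * Complex.abs w := by
    have h1 : Complex.abs (2 * w - z) ≤ 2 * Complex.abs w + Complex.abs z := by
      simpa using Complex.abs.sub_le_add (2 * w) z
    linarith
  calc Complex.abs z * Complex.abs (2 * w - z) /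
        (Complex.abs (z - w) ^ 2 * Complex.abs w ^ 2)
      ≤ Complex.abs z * (3 * Complex.abs w) /
          ((Complex.abs w / 2) ^ 2 * Complex.abs w ^ 2) := by
        gcongr
      _ = 12 * Complex.abs z * ((Complex.abs w)⁻¹) ^ 3 := by
        field_simp
        ring

lemma wp_eq_Wsum (hτ : 0 < τ.im) (z : ℂ) : wp τ z = Wsum τ z := by
  have hs := summable_wterm hτ z
  have h := hs.tsum_subtype_add_tsum_subtype_compl {0}
  rw [tsum_singleton (0 : ℤ × ℤ) (wterm τ z)] at h
  unfold Wsum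
  rw [← h]
  unfold wp
  congr 1
  · rw [wterm, lat_zero]
    simp [one_div]
  · let e : {p : ℤ × ℤ // p ∈ ({0}ᶜ : Set (ℤ × ℤ))} ≃ {p : ℤ × ℤ // p ≠ 0} :=
      Equiv.subtypeEquivRight (fun p => Set.mem_compl_singleton_iff)
    have h2 : (∑' x : ({0}ᶜ : Set (ℤ × ℤ)), wterm τ z ↑x) =
        ∑' q : {p : ℤ × ℤ // p ≠ 0}, wterm τ z q.1 :=
      e.tsum_eq (fun q : {p : ℤ × ℤ // p ≠ 0} => wterm τ z q.1)
    rw [h2]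
    refine tsum_congr fun p => ?_
    rw [wterm]
    simp only [one_div]
    rfl

def Lset (τ : ℂ) : Set ℂ := Set.range (lat τ)

lemma Lset_countable (τ : ℂ) : (Lset τ).Countable := Set.countable_range _

lemma zero_mem_Lset (τ : ℂ) : (0 : ℂ) ∈ Lset τ := ⟨0, lat_zero τ⟩

lemma Lset_closed (hτ : τ.im ≠ 0) : IsClosed (Lset τ) := by
  let e : (ℝ × ℝ) ≃ₗ[ℝ] ℂ :=
    { toFun := fun p => (p.1 : ℂ) + (p.2 : ℂ) * τ
      map_add' := by intro p q; simp only [Prod.fst_add, Prod.snd_add]; push_cast; ring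
      map_smul' := by intro c p; simp [Complex.ofReal_mul]; ring
      invFun := fun z => (z.re - z.im * τ.re / τ.im, z.im / τ.im)
      left_inv := by
        intro p
        ext
        · simp only [Complex.add_re, Complex.ofReal_re, Complex.mul_re, Complex.ofReal_im,
            Complex.add_im, Complex.mul_im, zero_mul, sub_zero, zero_add]
          field_simp
          try ring
        · simp only [Complex.add_im, Complex.ofReal_im, Complex.mul_im, Complex.ofReal_re,
            zero_mul, add_zero, zero_add]
          field_simp
      right_inv := by
        intro z
        apply Complex.ext
        · simp [Complex.add_re, Complex.mul_re]
          field_simp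
          try ring
        · simp [Complex.add_im, Complex.mul_im]
          field_simp }
  have himg : Lset τ = (e.toContinuousLinearEquiv.toHomeomorph) ''
      ((Set.range ((↑) : ℤ → ℝ)) ×ˢ (Set.range ((↑) : ℤ → ℝ))) := by
    ext z
    constructor
    · rintro ⟨p, rfl⟩
      exact ⟨((p.1 : ℝ), (p.2 : ℝ)), ⟨⟨p.1, rfl⟩, ⟨p.2, rfl⟩⟩, by
        show (((p.1 : ℝ) : ℂ) + ((p.2 : ℝ) : ℂ) * τ) = lat τ p
        rw [lat]; norm_num⟩
    · rintro ⟨⟨x, y⟩, ⟨⟨m, hm⟩, ⟨n, hn⟩⟩, hz⟩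
      refine ⟨(m, n), ?_⟩
      rw [← hz]
      show ((m : ℂ) + (n : ℂ) * τ) = ((x : ℂ) + (y : ℂ) * τ)
      simp only at hm hn
      rw [← hm, ← hn]
      norm_num
  rw [himg]
  rw [Homeomorph.isClosed_image]
  exact (Int.isClosedEmbedding_coe_real.isClosed_range).prod
    (Int.isClosedEmbedding_coe_real.isClosed_range)


lemma notin_shift {z : ℂ} (hz : z ∉ Lset τ) (q : ℤ × ℤ) : z + lat τ q ∉ Lset τ := by
  rintro ⟨p, hp⟩
  exact hz ⟨p - q, by rw [lat_sub, hp]; ring⟩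

lemma hasDerivAt_Wsum (hτ : 0 < τ.im) {z : ℂ} (hz : z ∉ Lset τ) :
    HasDerivAt (Wsum τ) (Dsum τ z) z := by
  have hLclosed := Lset_closed (ne_of_gt hτ)
  set d₀ := Metric.infDist z (Lset τ) with hd0
  have hd0pos : 0 < d₀ :=
    (hLclosed.notMem_iff_infDist_pos ⟨0, zero_mem_Lset τ⟩).mp hz
  set δ := min (d₀ / 2) 1 with hδ
  have hδpos : 0 < δ := lt_min (by linarith) one_pos
  have hδle : δ ≤ d₀ / 2 := min_le_left _ _
  have hδ1 : δ ≤ 1 := min_le_right _ _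
  have havoid : ∀ y ∈ Metric.ball z δ, ∀ p : ℤ × ℤ, δ ≤ Complex.abs (y - lat τ p) := by
    intro y hy p
    have h1 : d₀ ≤ dist z (lat τ p) := Metric.infDist_le_dist_of_mem ⟨p, rfl⟩
    have h2 : dist z y < δ := by rwa [Metric.mem_ball, dist_comm] at hy
    have h3 : dist z (lat τ p) ≤ dist z y + dist y (lat τ p) := dist_triangle _ _ _
    have h4 : Complex.abs (y - lat τ p) = dist y (lat τ p) := (Complex.dist_eq _ _).symm
    rw [h4]
    linarith
  set u : ℤ × ℤ → ℝ := fun p =>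
    if Complex.abs (lat τ p) ≤ 2 * (Complex.abs z + 1) then 2 * (δ⁻¹) ^ 3
    else 16 * ((Complex.abs (lat τ p))⁻¹) ^ 3 with hu_def
  have hu : Summable u := by
    apply summable_of_locbound hτ u 16 (2 * (Complex.abs z + 1) + 1)
    intro p hp
    have hgt : ¬ Complex.abs (lat τ p) ≤ 2 * (Complex.abs z + 1) := by linarith
    rw [hu_def]
    simp only [if_neg hgt]
    rw [Real.norm_of_nonneg (by positivity)]
  have hterm : ∀ p : ℤ × ℤ, ∀ y ∈ Metric.ball z δ,
      HasDerivAt (fun y => wterm τ y p) ((-2) * ((y - lat τ p) ^ 3)⁻¹) y := by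
    intro p y hy
    have hne : y - lat τ p ≠ 0 := by
      intro h
      have := havoid y hy p
      rw [h] at this
      simp at this
      linarith
    have h1 : HasDerivAt (fun y : ℂ => y - lat τ p) 1 y := (hasDerivAt_id y).sub_const _
    have h2 := h1.pow 2
    have h3 := h2.inv (pow_ne_zero 2 hne)
    have h4 := h3.sub_const (((lat τ p) ^ 2)⁻¹)
    refine h4.congr_deriv ?_
    simp only [Pi.pow_apply]
    field_simp
    ring
  have hbound : ∀ p : ℤ × ℤ, ∀ y ∈ Metric.ball z δ,
      ‖(-2 : ℂ) * ((y - lat τ p) ^ 3)⁻¹‖ ≤ u p := by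
    intro p y hy
    have havd := havoid y hy p
    have hpos : 0 < Complex.abs (y - lat τ p) := lt_of_lt_of_le hδpos havd
    have hn : ‖(-2 : ℂ) * ((y - lat τ p) ^ 3)⁻¹‖ =
        2 * ((Complex.abs (y - lat τ p)) ^ 3)⁻¹ := by
      rw [norm_mul, norm_inv, norm_pow]
      norm_num
    rw [hn, hu_def]
    simp only []
    by_cases hcase : Complex.abs (lat τ p) ≤ 2 * (Complex.abs z + 1)
    · rw [if_pos hcase]
      show _ ≤ 2 * (δ⁻¹) ^ 3
      have : (Complex.abs (y - lat τ p) ^ 3)⁻¹ ≤ (δ ^ 3)⁻¹ := by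
        apply inv_anti₀ (by positivity)
        exact pow_le_pow_left₀ hδpos.le havd 3
      calc 2 * (Complex.abs (y - lat τ p) ^ 3)⁻¹ ≤ 2 * (δ ^ 3)⁻¹ := by linarith
        _ = 2 * (δ⁻¹) ^ 3 := by rw [inv_pow]
    · rw [if_neg hcase]
      show _ ≤ 16 * ((Complex.abs (lat τ p))⁻¹) ^ 3
      push_neg at hcase
      have hyb : Complex.abs y ≤ Complex.abs z + 1 := by
        have h2 : dist z y < δ := by rwa [Metric.mem_ball, dist_comm] at hy
        have h3 : Complex.abs (y - z) < δ := by
          rwa [Complex.dist_eq, norm_sub_rev] at h2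
        have := Complex.abs.add_le (y - z) z
        simp only [sub_add_cancel] at this
        linarith
      have hw2 : Complex.abs (lat τ p) / 2 ≤ Complex.abs (y - lat τ p) := by
        have h1 : Complex.abs (lat τ p) ≤ Complex.abs (y - lat τ p) + Complex.abs y := by
          calc Complex.abs (lat τ p) = Complex.abs (lat τ p - y + y) := by ring_nf
            _ ≤ Complex.abs (lat τ p - y) + Complex.abs y := Complex.abs.add_le _ _
            _ = Complex.abs (y - lat τ p) + Complex.abs y := by rw [AbsoluteValue.map_sub]
        linarith
      have hwpos : (0 : ℝ) < Complex.abs (lat τ p) := by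
        have := Complex.abs.nonneg z
        linarith
      have hstep : (Complex.abs (y - lat τ p) ^ 3)⁻¹ ≤
          ((Complex.abs (lat τ p) / 2) ^ 3)⁻¹ := by
        apply inv_anti₀ (by positivity)
        exact pow_le_pow_left₀ (by positivity) hw2 3
      calc 2 * (Complex.abs (y - lat τ p) ^ 3)⁻¹
          ≤ 2 * ((Complex.abs (lat τ p) / 2) ^ 3)⁻¹ := by linarith
        _ = 16 * ((Complex.abs (lat τ p))⁻¹) ^ 3 := by
            rw [div_pow, inv_div, inv_pow]
            ring
  have key := hasDerivAt_tsum_of_isPreconnected hu Metric.isOpen_ball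
    (convex_ball z δ).isPreconnected hterm hbound (Metric.mem_ball_self hδpos)
    (summable_wterm hτ z) (Metric.mem_ball_self hδpos)
  exact key


/-- a function with zero derivative on an open preconnected set is constant -/
lemma const_of_deriv_zero {U : Set ℂ} (hU : IsOpen U) (hconn : IsPreconnected U)
    {F : ℂ → ℂ} (hF : ∀ x ∈ U, HasDerivAt F 0 x) {x y : ℂ} (hx : x ∈ U) (hy : y ∈ U) :
    F x = F y := by
  have loc : ∀ w ∈ U, ∃ ε > 0, Metric.ball w ε ⊆ U ∧ ∀ v ∈ Metric.ball w ε, F v = F w := by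
    intro w hw
    obtain ⟨ε, hε, hball⟩ := Metric.isOpen_iff.mp hU w hw
    refine ⟨ε, hε, hball, fun v hv => ?_⟩
    refine Convex.is_const_of_fderivWithin_eq_zero (convex_ball w ε)
      (fun v hv' => ((hF v (hball hv')).differentiableAt).differentiableWithinAt)
      (fun v hv' => ?_) hv (Metric.mem_ball_self hε)
    rw [fderivWithin_of_isOpen Metric.isOpen_ball hv']
    have h1 : HasFDerivAt F (ContinuousLinearMap.smulRight (1 : ℂ →L[ℂ] ℂ) (0 : ℂ)) v :=
      (hF v (hball hv')).hasFDerivAt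
    rw [h1.fderiv]
    ext w'
    simp
  set S := {w : ℂ | w ∈ U ∧ F w = F y} with hS
  set T := {w : ℂ | w ∈ U ∧ F w ≠ F y} with hT
  have hSopen : IsOpen S := by
    rw [Metric.isOpen_iff]
    rintro w ⟨hwU, hwF⟩
    obtain ⟨ε, hε, hball, hconst⟩ := loc w hwU
    exact ⟨ε, hε, fun v hv => ⟨hball hv, (hconst v hv).trans hwF⟩⟩
  have hTopen : IsOpen T := by
    rw [Metric.isOpen_iff]
    rintro w ⟨hwU, hwF⟩
    obtain ⟨ε, hε, hball, hconst⟩ := loc w hwU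
    exact ⟨ε, hε, fun v hv => ⟨hball hv, by rw [hconst v hv]; exact hwF⟩⟩
  by_contra hne
  have hcover : U ⊆ S ∪ T := by
    intro w hw
    by_cases h : F w = F y
    · exact Or.inl ⟨hw, h⟩
    · exact Or.inr ⟨hw, h⟩
  have hSne : (U ∩ S).Nonempty := ⟨y, hy, hy, rfl⟩
  have hTne : (U ∩ T).Nonempty := ⟨x, hx, hx, hne⟩
  obtain ⟨w, _, hwS, hwT⟩ := hconn S T hSopen hTopen hcover hSne hTne
  exact hwT.2 hwS.2

lemma Lset_compl_preconnected (τ : ℂ) : IsPreconnected (Lset τ)ᶜ := by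
  have h := (Lset_countable τ).isPathConnected_compl_of_one_lt_rank
    (by rw [Complex.rank_real_complex]; norm_num)
  exact h.isConnected.isPreconnected

/-- shift invariance from one good half-period -/
lemma Wsum_shift_of (hτ : 0 < τ.im) (q : ℤ × ℤ) (hhalf : -(lat τ q / 2) ∉ Lset τ)
    {z : ℂ} (hz : z ∉ Lset τ) : Wsum τ (z + lat τ q) = Wsum τ z := by
  have hUopen : IsOpen (Lset τ)ᶜ := (Lset_closed (ne_of_gt hτ)).isOpen_compl
  have hUconn := Lset_compl_preconnected τ
  set F := fun y : ℂ => Wsum τ (y + lat τ q) - Wsum τ y with hF_def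
  have hF : ∀ x ∈ (Lset τ)ᶜ, HasDerivAt F 0 x := by
    intro x hx
    have hx2 : x + lat τ q ∉ Lset τ := notin_shift hx q
    have h1 : HasDerivAt (fun y : ℂ => Wsum τ (y + lat τ q)) (Dsum τ (x + lat τ q)) x := by
      have hA := hasDerivAt_Wsum hτ hx2
      have hB : HasDerivAt (fun y : ℂ => y + lat τ q) 1 x := (hasDerivAt_id x).add_const _
      have hcomp := HasDerivAt.comp x hA hB
      rw [mul_one] at hcomp; exact hcomp
    have h2 := hasDerivAt_Wsum hτ (show x ∉ Lset τ from hx)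
    have h3 := h1.sub h2
    rw [Dsum_shift] at h3
    rw [sub_self] at h3; exact h3
  have hbase : F (-(lat τ q / 2)) = 0 := by
    show Wsum τ (-(lat τ q / 2) + lat τ q) - Wsum τ (-(lat τ q / 2)) = 0
    rw [show -(lat τ q / 2) + lat τ q = lat τ q / 2 by ring]
    rw [Wsum_even τ (lat τ q / 2)]
    ring
  have hconst := const_of_deriv_zero hUopen hUconn hF
    (show z ∈ (Lset τ)ᶜ from hz) (show -(lat τ q / 2) ∈ (Lset τ)ᶜ from hhalf)
  have : F z = 0 := by rw [hconst, hbase]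
  exact sub_eq_zero.mp this

lemma lat_eq_real_combo (hτ : τ.im ≠ 0) {p : ℤ × ℤ} {x y : ℝ}
    (h : lat τ p = (x : ℂ) + (y : ℂ) * τ) : (p.1 : ℝ) = x ∧ (p.2 : ℝ) = y := by
  have him := congrArg Complex.im h
  have hre := congrArg Complex.re h
  simp only [lat, Complex.add_im, Complex.add_re, Complex.mul_im, Complex.mul_re,
    Complex.intCast_im, Complex.intCast_re, Complex.ofReal_im, Complex.ofReal_re,
    zero_mul, mul_zero, add_zero, zero_add, sub_zero] at him hre
  have h2 : (p.2 : ℝ) = y := by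
    have hmul : ((p.2 : ℝ) - y) * τ.im = 0 := by linarith
    rcases mul_eq_zero.mp hmul with h' | h'
    · linarith
    · exact absurd h' hτ
  refine ⟨?_, h2⟩
  rw [h2] at hre
  linarith

lemma int_not_half {m : ℤ} : ((m : ℝ) ≠ -(1/2)) := by
  intro h
  have : (2 * m : ℝ) = -1 := by linarith
  have h2 : (2 * m : ℤ) = -1 := by exact_mod_cast this
  omega

lemma Wsum_one_shift (hτ : 0 < τ.im) {z : ℂ} (hz : z ∉ Lset τ) :
    Wsum τ (z + 1) = Wsum τ z := by
  have hlat : lat τ ((1 : ℤ), (0 : ℤ)) = 1 := by simp [lat]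
  have hhalf : -(lat τ ((1 : ℤ), (0 : ℤ)) / 2) ∉ Lset τ := by
    rw [hlat]
    rintro ⟨p, hp⟩
    have hcombo : lat τ p = ((-(1/2) : ℝ) : ℂ) + ((0 : ℝ) : ℂ) * τ := by
      rw [hp]; norm_num
    obtain ⟨h1, _⟩ := lat_eq_real_combo (ne_of_gt hτ) hcombo
    exact int_not_half h1
  have := Wsum_shift_of hτ ((1 : ℤ), (0 : ℤ)) hhalf hz
  rwa [hlat] at this


lemma Wsum_tau_shift (hτ : 0 < τ.im) {z : ℂ} (hz : z ∉ Lset τ) :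
    Wsum τ (z + τ) = Wsum τ z := by
  have hlat : lat τ ((0 : ℤ), (1 : ℤ)) = τ := by simp [lat]
  have hhalf : -(lat τ ((0 : ℤ), (1 : ℤ)) / 2) ∉ Lset τ := by
    rw [hlat]
    rintro ⟨p, hp⟩
    have hcombo : lat τ p = ((0 : ℝ) : ℂ) + ((-(1/2) : ℝ) : ℂ) * τ := by
      rw [hp]; push_cast; ring
    obtain ⟨_, h2⟩ := lat_eq_real_combo (ne_of_gt hτ) hcombo
    exact int_not_half h2
  have := Wsum_shift_of hτ ((0 : ℤ), (1 : ℤ)) hhalf hz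
  rwa [hlat] at this

lemma notin_shift_int {z : ℂ} (hz : z ∉ Lset τ) (m : ℤ) : z + (m : ℂ) ∉ Lset τ := by
  have := notin_shift hz (m, 0)
  simpa [lat] using this

lemma notin_shift_tau_mul {z : ℂ} (hz : z ∉ Lset τ) (n : ℤ) : z + (n : ℂ) * τ ∉ Lset τ := by
  have := notin_shift hz (0, n)
  simpa [lat] using this

lemma Wsum_int_mul_shift (hτ : 0 < τ.im) (m : ℤ) {z : ℂ} (hz : z ∉ Lset τ) :
    Wsum τ (z + (m : ℂ)) = Wsum τ z := by
  induction m using Int.induction_on with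
  | zero => simp
  | succ n ih =>
    have h1 := Wsum_one_shift hτ (notin_shift_int hz (n : ℤ))
    push_cast at h1 ih ⊢
    rw [show z + ((n : ℂ) + 1) = z + (n : ℂ) + 1 by ring, h1]
    exact ih
  | pred n ih =>
    have h1 := Wsum_one_shift hτ (notin_shift_int hz (-(n : ℤ) - 1))
    push_cast at h1 ih ⊢
    rw [show z + (-(n : ℂ) - 1) + 1 = z + -(n : ℂ) by ring] at h1
    rw [← h1]
    exact ih
  
lemma Wsum_tau_mul_shift (hτ : 0 < τ.im) (n : ℤ) {z : ℂ} (hz : z ∉ Lset τ) :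
    Wsum τ (z + (n : ℂ) * τ) = Wsum τ z := by
  induction n using Int.induction_on with
  | zero => simp
  | succ n ih =>
    have h1 := Wsum_tau_shift hτ (notin_shift_tau_mul hz (n : ℤ))
    push_cast at h1 ih ⊢
    rw [show z + ((n : ℂ) + 1) * τ = z + (n : ℂ) * τ + τ by ring, h1]
    exact ih
  | pred n ih =>
    have h1 := Wsum_tau_shift hτ (notin_shift_tau_mul hz (-(n : ℤ) - 1))
    push_cast at h1 ih ⊢
    rw [show z + (-(n : ℂ) - 1) * τ + τ = z + -(n : ℂ) * τ by ring] at h1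
    rw [← h1]
    exact ih

lemma Wsum_periodic (hτ : 0 < τ.im) (q : ℤ × ℤ) {z : ℂ} (hz : z ∉ Lset τ) :
    Wsum τ (z + lat τ q) = Wsum τ z := by
  rw [show z + lat τ q = (z + (q.1 : ℂ)) + (q.2 : ℂ) * τ by rw [lat]; ring]
  rw [Wsum_tau_mul_shift hτ q.2 (notin_shift_int hz q.1), Wsum_int_mul_shift hτ q.1 hz]


lemma wp_even' (hτ : 0 < τ.im) (z : ℂ) : wp τ (-z) = wp τ z := by
  rw [wp_eq_Wsum hτ, wp_eq_Wsum hτ, Wsum_even]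

lemma wp_periodic (hτ : 0 < τ.im) (q : ℤ × ℤ) {z : ℂ} (hz : z ∉ Lset τ) :
    wp τ (z + lat τ q) = wp τ z := by
  rw [wp_eq_Wsum hτ, wp_eq_Wsum hτ]
  exact Wsum_periodic hτ q hz

lemma notin_neg {z : ℂ} (hz : z ∉ Lset τ) : -z ∉ Lset τ := by
  rintro ⟨p, hp⟩
  exact hz ⟨-p, by rw [lat_neg, hp]; ring⟩

lemma int_mul_eq_of_lt {x : ℕ} {N : ℕ} (hN : 0 < N) (hx : x < N) {k : ℤ}
    (h : (x : ℤ) = (N : ℤ) * k) : x = 0 ∧ k = 0 := by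
  rcases lt_trichotomy k 0 with hk | hk | hk
  · exfalso
    have : (N : ℤ) * k ≤ -N := by
      have : k ≤ -1 := by omega
      nlinarith [Int.natCast_pos.mpr hN]
    omega
  · subst hk; simp at h; omega
  · exfalso
    have : (N : ℤ) ≤ (N : ℤ) * k := by nlinarith [Int.natCast_pos.mpr hN]
    omega

lemma phi_not_lat {N : ℕ} [NeZero N] (hN : 0 < N) (hτ : 0 < τ.im)
    {Q : ZMod N × ZMod N} (hQ : Q ≠ 0) : phiPt N τ Q ∉ Lset τ := by
  rintro ⟨p, hp⟩
  have hNR : (N : ℝ) ≠ 0 := by positivity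
  have hcombo : lat τ p = ((Q.2.val / N : ℝ) : ℂ) + ((Q.1.val / N : ℝ) : ℂ) * τ := by
    rw [hp, phiPt]
    push_cast
    field_simp
    ring
  obtain ⟨h1, h2⟩ := lat_eq_real_combo (ne_of_gt hτ) hcombo
  have h1' : ((Q.2.val : ℤ) : ℝ) = (N : ℝ) * (p.1 : ℝ) := by
    rw [eq_div_iff hNR] at h1
    push_cast
    linarith [h1]
  have h2' : ((Q.1.val : ℤ) : ℝ) = (N : ℝ) * (p.2 : ℝ) := by
    rw [eq_div_iff hNR] at h2
    push_cast
    linarith [h2]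
  have h1i : ((Q.2.val : ℤ)) = (N : ℤ) * p.1 := by exact_mod_cast h1'
  have h2i : ((Q.1.val : ℤ)) = (N : ℤ) * p.2 := by exact_mod_cast h2'
  obtain ⟨hv2, _⟩ := int_mul_eq_of_lt hN (ZMod.val_lt Q.2) h1i
  obtain ⟨hv1, _⟩ := int_mul_eq_of_lt hN (ZMod.val_lt Q.1) h2i
  apply hQ
  have e1 : Q.1 = 0 := (ZMod.val_eq_zero Q.1).mp hv1
  have e2 : Q.2 = 0 := (ZMod.val_eq_zero Q.2).mp hv2
  exact Prod.ext e1 e2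

/-- the key transformation of wp composed with phiPt -/
lemma wp_phi_transform {N : ℕ} (hN : 2 ≤ N) (hτ : 0 < τ.im)
    (a b c d : ℤ) (hdet : a * d - b * c = 1) (hj : (c : ℂ) * τ + d ≠ 0)
    (hcong : ((a : ZMod N) = 1 ∧ (b : ZMod N) = 0 ∧ (c : ZMod N) = 0 ∧ (d : ZMod N) = 1) ∨
             ((a : ZMod N) = -1 ∧ (b : ZMod N) = 0 ∧ (c : ZMod N) = 0 ∧ (d : ZMod N) = -1))
    (Q : ZMod N × ZMod N) (hQ : Q ≠ 0) :
    wp (((a : ℂ) * τ + b) / ((c : ℂ) * τ + d))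
        (phiPt N (((a : ℂ) * τ + b) / ((c : ℂ) * τ + d)) Q) =
      ((c : ℂ) * τ + d) ^ 2 * wp τ (phiPt N τ Q) := by
  haveI : NeZero N := ⟨by omega⟩
  have hNpos : 0 < N := by omega
  have hNC : (N : ℂ) ≠ 0 := by
    simp only [ne_eq, Nat.cast_eq_zero]
    omega
  set r : ℤ := (Q.1.val : ℤ) with hr
  set s : ℤ := (Q.2.val : ℤ) with hs
  set j : ℂ := (c : ℂ) * τ + d with hjdef
  set w : ℂ := (((r * a + s * c : ℤ) : ℂ) * τ + ((r * b + s * d : ℤ) : ℂ)) / N with hwdef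
  have hc1 : ((r : ℤ) : ℂ) = (Q.1.val : ℂ) := by rw [hr]; exact_mod_cast rfl
  have hc2 : ((s : ℤ) : ℂ) = (Q.2.val : ℂ) := by rw [hs]; exact_mod_cast rfl
  have hphi' : phiPt N (((a : ℂ) * τ + b) / j) Q = w / j := by
    rw [phiPt, hwdef, ← hc1, ← hc2]
    push_cast [-ZMod.natCast_val]
    field_simp
    ring
  rw [hphi', wp_modular a b c d hdet hj w]
  congr 1
  have hphiL : phiPt N τ Q ∉ Lset τ := phi_not_lat hNpos hτ hQ
  rcases hcong with ⟨ha, hb, hc, hd⟩ | ⟨ha, hb, hc, hd⟩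
  · have hdvd1 : (N : ℤ) ∣ (r * a + s * c - r) := by
      have hz : ((r * a + s * c - r : ℤ) : ZMod N) = 0 := by
        push_cast [ha, hc]
        ring
      exact (ZMod.intCast_zmod_eq_zero_iff_dvd _ N).mp hz
    have hdvd2 : (N : ℤ) ∣ (r * b + s * d - s) := by
      have hz : ((r * b + s * d - s : ℤ) : ZMod N) = 0 := by
        push_cast [hb, hd]
        ring
      exact (ZMod.intCast_zmod_eq_zero_iff_dvd _ N).mp hz
    obtain ⟨n', hn'⟩ := hdvd1
    obtain ⟨m', hm'⟩ := hdvd2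
    have hw : w = phiPt N τ Q + lat τ (m', n') := by
      rw [hwdef, phiPt, lat]
      have e1 : (r * a + s * c : ℤ) = r + N * n' := by linear_combination hn'
      have e2 : (r * b + s * d : ℤ) = s + N * m' := by linear_combination hm'
      rw [e1, e2, ← hc1, ← hc2]
      push_cast [-ZMod.natCast_val]
      field_simp
      ring
    rw [hw, wp_periodic hτ (m', n') hphiL]
  · have hdvd1 : (N : ℤ) ∣ (r * a + s * c + r) := by
      have hz : ((r * a + s * c + r : ℤ) : ZMod N) = 0 := by
        push_cast [ha, hc]
        ring
      exact (ZMod.intCast_zmod_eq_zero_iff_dvd _ N).mp hz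
    have hdvd2 : (N : ℤ) ∣ (r * b + s * d + s) := by
      have hz : ((r * b + s * d + s : ℤ) : ZMod N) = 0 := by
        push_cast [hb, hd]
        ring
      exact (ZMod.intCast_zmod_eq_zero_iff_dvd _ N).mp hz
    obtain ⟨n', hn'⟩ := hdvd1
    obtain ⟨m', hm'⟩ := hdvd2
    have hw : w = -(phiPt N τ Q) + lat τ (m', n') := by
      rw [hwdef, phiPt, lat]
      have e1 : (r * a + s * c : ℤ) = -r + N * n' := by linear_combination hn'
      have e2 : (r * b + s * d : ℤ) = -s + N * m' := by linear_combination hm'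
      rw [e1, e2, ← hc1, ← hc2]
      push_cast [-ZMod.natCast_val]
      field_simp
      ring
    rw [hw, wp_periodic hτ (m', n') (notin_neg hphiL), wp_even' hτ]


end

end Stmt12Aux

open Stmt12Aux

/-- `Λ(τ; Q₁, Q₂)` is invariant under `{±I}·Γ(N)`. -/
theorem stmt12 (N : ℕ) (hN : 2 ≤ N) (Q₁ Q₂ : ZMod N × ZMod N)
    (hbasis : IsUnit (Q₁.1 * Q₂.2 - Q₁.2 * Q₂.1))
    (A : Matrix.SpecialLinearGroup (Fin 2) ℤ)
    (hA : (A : Matrix (Fin 2) (Fin 2) ℤ).map (Int.cast : ℤ → ZMod N) = 1 ∨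
          (A : Matrix (Fin 2) (Fin 2) ℤ).map (Int.cast : ℤ → ZMod N) = -1)
    (τ : ℂ) (hτ : 0 < τ.im) :
    LambdaB N Q₁ Q₂
        (((A 0 0 : ℤ) * τ + (A 0 1 : ℤ)) / ((A 1 0 : ℤ) * τ + (A 1 1 : ℤ))) =
      LambdaB N Q₁ Q₂ τ := by
  haveI : NeZero N := ⟨by omega⟩
  haveI : Nontrivial (ZMod N) := by
    haveI : Fact (1 < N) := ⟨by omega⟩
    infer_instance
  set a : ℤ := A 0 0 with ha'
  set b : ℤ := A 0 1 with hb'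
  set c : ℤ := A 1 0 with hc'
  set d : ℤ := A 1 1 with hd'
  have hdet : a * d - b * c = 1 := by
    have h := A.2
    rw [Matrix.det_fin_two] at h
    linarith [h]
  -- denominator nonzero
  have hj : (c : ℂ) * τ + d ≠ 0 := by
    intro h
    have him := congrArg Complex.im h
    simp only [Complex.add_im, Complex.mul_im, Complex.intCast_im, Complex.intCast_re,
      zero_mul, add_zero, zero_add, Complex.zero_im] at him
    have hc0 : (c : ℝ) = 0 := by
      rcases mul_eq_zero.mp him with h' | h'
      · exact h'
      · exact absurd h' (ne_of_gt hτ)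
    have hc0' : c = 0 := by exact_mod_cast hc0
    rw [hc0'] at h
    simp only [Int.cast_zero, zero_mul, zero_add] at h
    have hd0 : d = 0 := by exact_mod_cast h
    rw [hc0', hd0] at hdet
    simp at hdet
  -- congruence data
  have hcong : ((a : ZMod N) = 1 ∧ (b : ZMod N) = 0 ∧ (c : ZMod N) = 0 ∧ (d : ZMod N) = 1) ∨
      ((a : ZMod N) = -1 ∧ (b : ZMod N) = 0 ∧ (c : ZMod N) = 0 ∧ (d : ZMod N) = -1) := by
    rcases hA with h | h
    · left
      refine ⟨?_, ?_, ?_, ?_⟩ <;>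
        [have := congrFun (congrFun h 0) 0; have := congrFun (congrFun h 0) 1;
         have := congrFun (congrFun h 1) 0; have := congrFun (congrFun h 1) 1] <;>
        simpa [Matrix.map_apply, Matrix.one_apply] using this
    · right
      refine ⟨?_, ?_, ?_, ?_⟩ <;>
        [have := congrFun (congrFun h 0) 0; have := congrFun (congrFun h 0) 1;
         have := congrFun (congrFun h 1) 0; have := congrFun (congrFun h 1) 1] <;>
        simpa [Matrix.map_apply, Matrix.one_apply] using this
  -- nonzero points
  have hQ1 : Q₁ ≠ 0 := by
    intro h
    rw [h] at hbasis
    simp at hbasis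
  have hQ2 : Q₂ ≠ 0 := by
    intro h
    rw [h] at hbasis
    simp at hbasis
  have hQ12 : Q₁ + Q₂ ≠ 0 := by
    intro h
    have h2 : Q₂ = -Q₁ := by
      have := eq_neg_of_add_eq_zero_right h
      rw [this]
    rw [h2] at hbasis
    simp only [Prod.fst_neg, Prod.snd_neg, mul_neg] at hbasis
    rw [show -(Q₁.1 * Q₁.2) - -(Q₁.2 * Q₁.1) = 0 by ring] at hbasis
    exact not_isUnit_zero hbasis
  have k1 := wp_phi_transform hN hτ a b c d hdet hj hcong Q₁ hQ1
  have k2 := wp_phi_transform hN hτ a b c d hdet hj hcong Q₂ hQ2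
  have k12 := wp_phi_transform hN hτ a b c d hdet hj hcong (Q₁ + Q₂) hQ12
  unfold LambdaB
  rw [k1, k2, k12, ← mul_sub, ← mul_sub,
    mul_div_mul_left _ _ (pow_ne_zero 2 hj)]
end

section
/- Let N > 2 and let k be an integer with gcd(k, N) = 1. Then C_N/(1 − ζ^k)³ lies in ℤ[ζ]. -/
open Complex

/-- `C_N/(1 − ζ^k)³ ∈ ℤ[ζ]` for `N > 2` and `gcd(k, N) = 1`. -/
theorem stmt16 (N : ℕ) (hN : 2 < N) (k : ℤ) (hk : Int.gcd k N = 1) :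
    (CN N : ℂ) / (1 - zetaN N ^ k) ^ 3 ∈ Algebra.adjoin ℤ ({zetaN N} : Set ℂ) := by
  have hN0 : N ≠ 0 := by omega
  haveI : NeZero N := ⟨hN0⟩
  set ζ := zetaN N with hζdef
  have hζ : IsPrimitiveRoot ζ N := by
    simpa [zetaN, hζdef] using Complex.isPrimitiveRoot_exp N hN0
  have hζ0 : ζ ≠ 0 := hζ.ne_zero hN0
  set S := Algebra.adjoin ℤ ({ζ} : Set ℂ) with hSdef
  have hζS : ζ ∈ S := Algebra.subset_adjoin rfl
  -- Lemma A : geometric series factorization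
  have lemA : ∀ x ∈ S, ∀ j : ℕ, ∃ w ∈ S, 1 - x ^ j = (1 - x) * w := by
    intro x hx j
    refine ⟨∑ i ∈ Finset.range j, x ^ i,
      Subalgebra.sum_mem S (fun i _ => Subalgebra.pow_mem S hx i), ?_⟩
    linear_combination geom_sum_mul x j
  -- reduce zpow to pow for N-th roots of 1
  have key : ∀ x : ℂ, x ≠ 0 → x ^ (N : ℕ) = 1 → ∀ a : ℤ, x ^ a = x ^ (a % (N : ℤ)).toNat := by
    intro x hx h1 a
    have hNpos : (0 : ℤ) < (N : ℤ) := by exact_mod_cast Nat.pos_of_ne_zero hN0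
    have hnonneg : 0 ≤ a % (N : ℤ) := Int.emod_nonneg a hNpos.ne'
    have : x ^ ((a % (N : ℤ)).toNat : ℤ) = x ^ (a % (N : ℤ)) := by
      rw [Int.toNat_of_nonneg hnonneg]
    rw [← zpow_natCast, this]
    conv_lhs => rw [← Int.emod_add_mul_ediv a (N : ℤ)]
    rw [zpow_add₀ hx, zpow_mul]
    have : x ^ ((N : ℤ)) = 1 := by rw [zpow_natCast, h1]
    rw [this, one_zpow, mul_one]
  have hζN : ζ ^ (N : ℕ) = 1 := hζ.pow_eq_one
  have hζkN : (ζ ^ k) ^ (N : ℕ) = 1 := by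
    rw [← zpow_natCast, ← zpow_mul, mul_comm, zpow_mul, zpow_natCast, hζN, one_zpow]
  have hζk0 : ζ ^ k ≠ 0 := zpow_ne_zero k hζ0
  have hζkS : ζ ^ k ∈ S := by
    rw [key ζ hζ0 hζN k]; exact Subalgebra.pow_mem S hζS _
  -- 1 - ζ^k ≠ 0
  have h1k : 1 - ζ ^ k ≠ 0 := by
    intro h
    have hzk1 : ζ ^ k = 1 := by linear_combination -h
    have := (hζ.zpow_eq_one_iff_dvd k).1 hzk1
    have : (N : ℤ) ∣ (Int.gcd k N : ℤ) := Int.dvd_coe_gcd this dvd_rfl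
    rw [hk] at this
    have := Int.le_of_dvd one_pos this
    omega
  -- Lemma B : (1 - ζ) = (1 - ζ^k) * v with v ∈ S
  obtain ⟨a, b, hab⟩ : IsCoprime k (N : ℤ) := Int.isCoprime_iff_gcd_eq_one.mpr hk
  have hpow : (ζ ^ k) ^ ((a % (N : ℤ)).toNat) = ζ := by
    rw [← key (ζ ^ k) hζk0 hζkN a, ← zpow_mul]
    have hka : k * a = 1 + (N : ℤ) * (-b) := by linarith
    rw [hka, zpow_add₀ hζ0, zpow_one, zpow_mul]
    have hN1 : ζ ^ ((N : ℤ)) = 1 := by rw [zpow_natCast, hζN]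
    rw [hN1, one_zpow, mul_one]
  obtain ⟨v, hvS, hveq⟩ := lemA (ζ ^ k) hζkS ((a % (N : ℤ)).toNat)
  rw [hpow] at hveq
  -- Lemma C : product formula
  have hprod : Polynomial.eval 1 (Polynomial.cyclotomic N ℂ)
      = ∏ μ ∈ primitiveRoots N ℂ, (1 - μ) := by
    rw [Polynomial.cyclotomic_eq_prod_X_sub_primitiveRoots hζ, Polynomial.eval_prod]
    simp
  have hfac : ∀ μ ∈ primitiveRoots N ℂ, ∃ w ∈ S, 1 - μ = (1 - ζ) * w := by
    intro μ hμ
    have hμ' := isPrimitiveRoot_of_mem_primitiveRoots hμ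
    obtain ⟨i, _, rfl⟩ := hζ.eq_pow_of_pow_eq_one hμ'.pow_eq_one
    exact lemA ζ hζS i
  have prodlem : ∀ s : Finset ℂ, (∀ μ ∈ s, ∃ w ∈ S, 1 - μ = (1 - ζ) * w) →
      ∃ W ∈ S, ∏ μ ∈ s, (1 - μ) = (1 - ζ) ^ s.card * W := by
    intro s
    induction s using Finset.induction_on with
    | empty => exact fun _ => ⟨1, Subalgebra.one_mem S, by simp⟩
    | @insert c s hc ih =>
      intro h
      obtain ⟨W, hW, hWeq⟩ := ih (fun μ hμ => h μ (Finset.mem_insert_of_mem hμ))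
      obtain ⟨w, hw, hweq⟩ := h c (Finset.mem_insert_self _ _)
      refine ⟨w * W, Subalgebra.mul_mem S hw hW, ?_⟩
      rw [Finset.prod_insert hc, Finset.card_insert_of_notMem hc, hweq, hWeq]
      ring
  obtain ⟨W, hWS, hWeq⟩ := prodlem _ hfac
  rw [hζ.card_primitiveRoots] at hWeq
  set φ := Nat.totient N with hφdef
  have hφpos : 0 < φ := Nat.totient_pos.mpr (by omega)
  have hφ2 : 2 ≤ φ := by
    obtain ⟨c, hc⟩ := Nat.totient_even hN
    omega
  have hcyc : Polynomial.eval 1 (Polynomial.cyclotomic N ℂ) = (1 - ζ) ^ φ * W := by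
    rw [hprod, hWeq]
  -- main: (CN N : ℂ) = (1-ζ)^3 * w3
  have main : ∃ w3 ∈ S, (CN N : ℂ) = (1 - ζ) ^ 3 * w3 := by
    by_cases hpp : IsPrimePow N
    · obtain ⟨p, n, hp, hn, rfl⟩ := hpp
      have hp' : p.Prime := Nat.prime_iff.mpr hp
      haveI : Fact p.Prime := ⟨hp'⟩
      have hmin : (p ^ n).minFac = p := hp'.pow_minFac (by omega)
      have heval : Polynomial.eval 1 (Polynomial.cyclotomic (p ^ n) ℂ) = (p : ℂ) := by
        obtain ⟨m, rfl⟩ : ∃ m, n = m + 1 := ⟨n - 1, by omega⟩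
        simp
      have hpW : (p : ℂ) = (1 - ζ) ^ φ * W := by rw [← heval, hcyc]
      have hpp' : IsPrimePow (p ^ n) := ⟨p, n, hp, hn, rfl⟩
      by_cases hple : p ≤ 3
      · have hCN : CN (p ^ n) = p ^ 2 := by
          rw [CN, if_neg (by omega : p ^ n ≠ 2), if_pos hpp', hmin, if_pos hple]
        refine ⟨(1 - ζ) ^ (2 * φ - 3) * W ^ 2,
          Subalgebra.mul_mem S (Subalgebra.pow_mem S (Subalgebra.sub_mem S
            (Subalgebra.one_mem S) hζS) _) (Subalgebra.pow_mem S hWS 2), ?_⟩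
        have h3 : 3 + (2 * φ - 3) = 2 * φ := by omega
        push_cast [hCN]
        calc (p : ℂ) ^ 2 = ((1 - ζ) ^ φ * W) ^ 2 := by rw [hpW]
          _ = (1 - ζ) ^ (2 * φ) * W ^ 2 := by rw [mul_pow, ← pow_mul, mul_comm φ 2]
          _ = (1 - ζ) ^ 3 * ((1 - ζ) ^ (2 * φ - 3) * W ^ 2) := by
              rw [← mul_assoc, ← pow_add, h3]
      · have hCN : CN (p ^ n) = p := by
          rw [CN, if_neg (by omega : p ^ n ≠ 2), if_pos hpp', hmin, if_neg hple]
        have hp5 : 5 ≤ p := by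
          have h4 : p ≠ 4 := by rintro rfl; norm_num at hp'
          have := hp'.two_le
          rcases Nat.lt_or_ge p 5 with h | h
          · interval_cases p <;> omega
          · exact h
        have hφ3 : 3 ≤ φ := by
          have := Nat.totient_prime_pow hp' hn
          rw [hφdef, this]
          have h1 : 1 ≤ p ^ (n - 1) := Nat.one_le_pow _ _ hp'.pos
          calc 3 ≤ p - 1 := by omega
            _ = 1 * (p - 1) := (one_mul _).symm
            _ ≤ p ^ (n - 1) * (p - 1) := Nat.mul_le_mul_right _ h1
        refine ⟨(1 - ζ) ^ (φ - 3) * W,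
          Subalgebra.mul_mem S (Subalgebra.pow_mem S (Subalgebra.sub_mem S
            (Subalgebra.one_mem S) hζS) _) hWS, ?_⟩
        have h3 : 3 + (φ - 3) = φ := by omega
        rw [hCN, hpW, ← mul_assoc, ← pow_add, h3]
    · have hCN : CN N = 1 := by
        rw [CN, if_neg (by omega : N ≠ 2), if_neg hpp]
      have heval : Polynomial.eval 1 (Polynomial.cyclotomic N ℂ) = 1 := by
        apply Polynomial.eval_one_cyclotomic_not_prime_pow
        intro p hp m hm
        rcases Nat.eq_zero_or_pos m with rfl | hm'
        · simp at hm; omega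
        · exact hpp ⟨p, m, Nat.prime_iff.mp hp, hm', hm⟩
      have h1W : (1 - ζ) ^ φ * W = (1 : ℂ) := by rw [← hcyc, heval]
      refine ⟨(1 - ζ) ^ (3 * φ - 3) * W ^ 3,
        Subalgebra.mul_mem S (Subalgebra.pow_mem S (Subalgebra.sub_mem S
          (Subalgebra.one_mem S) hζS) _) (Subalgebra.pow_mem S hWS 3), ?_⟩
      have h3 : 3 + (3 * φ - 3) = 3 * φ := by omega
      rw [hCN]
      push_cast
      calc (1 : ℂ) = ((1 - ζ) ^ φ * W) ^ 3 := by rw [h1W, one_pow]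
        _ = (1 - ζ) ^ (3 * φ) * W ^ 3 := by rw [mul_pow, ← pow_mul, mul_comm φ 3]
        _ = (1 - ζ) ^ 3 * ((1 - ζ) ^ (3 * φ - 3) * W ^ 3) := by
            rw [← mul_assoc, ← pow_add, h3]
  obtain ⟨w3, hw3S, hw3⟩ := main
  have hfinal : (CN N : ℂ) / (1 - ζ ^ k) ^ 3 = v ^ 3 * w3 := by
    rw [div_eq_iff (pow_ne_zero 3 h1k), hw3, hveq]
    ring
  rw [hfinal]
  exact Subalgebra.mul_mem S (Subalgebra.pow_mem S hvS 3) hw3S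
end
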